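/- arXiv:1706.00798 — 16 statements merged into one kernel-verified Lean document; each statement's English description precedes it below -/
import Mathlib

section
/- Let G be a finite simple graph and (b_1,…,b_k) a sequence of distinct vertices of G. Then there exist vertices a_1,…,a_k of G such that for every i = 1,…,k the force a_i→b_i is valid under CCR-Z_ℓ̇ with respect to the blue set V(G) ∖ {b_i, b_{i+1},…,b_k} if and only if (b_k, b_{k−1},…,b_1) is a dominating sequence of G. -/
namespace ZFGrundy

variable {V : Type*}

/-- `u` is a member of the closed neighborhood `N[x]` of `x` in `G`. -/
def ClosedNbr (G : SimpleGraph V) (x u : V) : Prop := u = x ∨ G.Adj x u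

/-- CCR-Z: the force `x → y` is valid w.r.t. blue set `S` if `y ∉ S`, `y ∈ N(x)`,
and `N[x] \ {y} ⊆ S`. -/
def ZForce (G : SimpleGraph V) (S : Set V) (x y : V) : Prop :=
  y ∉ S ∧ G.Adj x y ∧ ∀ u, ClosedNbr G x u → u ≠ y → u ∈ S

/-- CCR-Z_ℓ̇: the force `x → y` is valid w.r.t. blue set `S` if `y ∉ S`, `y ∈ N[x]`,
and `N[x] \ {y} ⊆ S`. -/
def ZelldForce (G : SimpleGraph V) (S : Set V) (x y : V) : Prop :=
  y ∉ S ∧ ClosedNbr G x y ∧ ∀ u, ClosedNbr G x u → u ≠ y → u ∈ S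

/-- CCR-Z_−: the force `x → y` is valid w.r.t. blue set `S` if `y ∉ S`, `y ∈ N(x)`,
and `N(x) \ {y} ⊆ S`. -/
def ZminusForce (G : SimpleGraph V) (S : Set V) (x y : V) : Prop :=
  y ∉ S ∧ G.Adj x y ∧ ∀ u, G.Adj x u → u ≠ y → u ∈ S

/-- CCR-Z_L: either `x ≠ y` and the force is valid under CCR-Z_−, or `x = y` and the
force is valid under CCR-Z_ℓ̇. -/
def ZLForce (G : SimpleGraph V) (S : Set V) (x y : V) : Prop :=
  (x ≠ y ∧ ZminusForce G S x y) ∨ (x = y ∧ ZelldForce G S x y)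

/-- `B` is a zero forcing set of `G` with respect to the color change rule `force`:
there is an ordering `b 0, …, b (k-1)` of the vertices outside `B` and vertices
`a 0, …, a (k-1)` such that each force `a i → b i` is valid w.r.t. the blue set
consisting of all vertices other than `b i, b (i+1), …, b (k-1)`. -/
def IsZFS (G : SimpleGraph V) (force : SimpleGraph V → Set V → V → V → Prop)
    (B : Finset V) : Prop :=
  ∃ (k : ℕ) (b a : Fin k → V), Function.Injective b ∧
    (∀ v : V, v ∉ B ↔ ∃ i, b i = v) ∧
    ∀ i : Fin k, force G {v | ∀ j : Fin k, i ≤ j → v ≠ b j} (a i) (b i)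

/-- The zero forcing number with respect to the color change rule `force`. -/
noncomputable def zfNum (G : SimpleGraph V)
    (force : SimpleGraph V → Set V → V → V → Prop) : ℕ :=
  sInf {m : ℕ | ∃ B : Finset V, IsZFS G force B ∧ B.card = m}

/-- A Z-sequence: distinct vertices with `N(v i) \ ⋃_{j<i} N[v j] ≠ ∅`. -/
def IsZSeq (G : SimpleGraph V) {k : ℕ} (v : Fin k → V) : Prop :=
  Function.Injective v ∧
  ∀ i, ∃ u, G.Adj (v i) u ∧ ∀ j, j < i → ¬ ClosedNbr G (v j) u

/-- A dominating sequence: distinct vertices with `N[v i] \ ⋃_{j<i} N[v j] ≠ ∅`. -/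
def IsDomSeq (G : SimpleGraph V) {k : ℕ} (v : Fin k → V) : Prop :=
  Function.Injective v ∧
  ∀ i, ∃ u, ClosedNbr G (v i) u ∧ ∀ j, j < i → ¬ ClosedNbr G (v j) u

/-- A total dominating sequence: distinct vertices with `N(v i) \ ⋃_{j<i} N(v j) ≠ ∅`. -/
def IsTotDomSeq (G : SimpleGraph V) {k : ℕ} (v : Fin k → V) : Prop :=
  Function.Injective v ∧
  ∀ i, ∃ u, G.Adj (v i) u ∧ ∀ j, j < i → ¬ G.Adj (v j) u

/-- An L-sequence: distinct vertices with `N[v i] \ ⋃_{j<i} N(v j) ≠ ∅`. -/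
def IsLSeq (G : SimpleGraph V) {k : ℕ} (v : Fin k → V) : Prop :=
  Function.Injective v ∧
  ∀ i, ∃ u, ClosedNbr G (v i) u ∧ ∀ j, j < i → ¬ G.Adj (v j) u

/-- The Z-Grundy domination number: the largest length of a Z-sequence. -/
noncomputable def grundyZ (G : SimpleGraph V) : ℕ :=
  sSup {k : ℕ | ∃ v : Fin k → V, IsZSeq G v}

/-- The Grundy domination number: the largest length of a dominating sequence. -/
noncomputable def grundyDom (G : SimpleGraph V) : ℕ :=
  sSup {k : ℕ | ∃ v : Fin k → V, IsDomSeq G v}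

/-- The Grundy total domination number: the largest length of a total dominating
sequence. -/
noncomputable def grundyTot (G : SimpleGraph V) : ℕ :=
  sSup {k : ℕ | ∃ v : Fin k → V, IsTotDomSeq G v}

/-- The L-Grundy domination number: the largest length of an L-sequence. -/
noncomputable def grundyL (G : SimpleGraph V) : ℕ :=
  sSup {k : ℕ | ∃ v : Fin k → V, IsLSeq G v}

/-- The largest length of a total dominating sequence using only vertices of `X`. -/
noncomputable def grundyTotOn (G : SimpleGraph V) (X : Set V) : ℕ :=
  sSup {k : ℕ | ∃ v : Fin k → V, IsTotDomSeq G v ∧ ∀ i, v i ∈ X}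

/-- The domination number: minimum size of a set `X` such that every vertex outside
`X` has a neighbor in `X`. -/
noncomputable def domNum (G : SimpleGraph V) : ℕ :=
  sInf {m : ℕ | ∃ X : Finset V, (∀ v, v ∉ X → ∃ u ∈ X, G.Adj v u) ∧ X.card = m}

/-- The vertex cover number: minimum size of a set of vertices meeting every edge. -/
noncomputable def vcNum (G : SimpleGraph V) : ℕ :=
  sInf {m : ℕ | ∃ C : Finset V, (∀ u w, G.Adj u w → u ∈ C ∨ w ∈ C) ∧ C.card = m}

/-- The family `S(G)` of real symmetric matrices whose off-diagonal entry `A i j`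
is nonzero exactly when `i` and `j` are adjacent in `G`. -/
def SFam (G : SimpleGraph V) : Set (Matrix V V ℝ) :=
  {A | A.IsSymm ∧ ∀ i j : V, i ≠ j → (A i j ≠ 0 ↔ G.Adj i j)}

/-- The family `S_ℓ̇(G)`: matrices in `S(G)` with all diagonal entries nonzero. -/
def SldFam (G : SimpleGraph V) : Set (Matrix V V ℝ) :=
  {A | A ∈ SFam G ∧ ∀ i : V, A i i ≠ 0}

/-- The family `S_0(G)`: matrices in `S(G)` with all diagonal entries zero. -/
def S0Fam (G : SimpleGraph V) : Set (Matrix V V ℝ) :=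
  {A | A ∈ SFam G ∧ ∀ i : V, A i i = 0}

/-- The bipartite graph `B_L(G)` on `{x_i} ∪ {y_i} ∪ {z_i}` (encoded as
`Sum.inl i`, `Sum.inr (Sum.inl i)`, `Sum.inr (Sum.inr i)`), with edges `{x i, y j}`
and `{x i, z j}` for every edge `{i, j}` of `G`, together with edges `{x i, y i}`
for every vertex `i`. -/
def BL (G : SimpleGraph V) : SimpleGraph (V ⊕ V ⊕ V) :=
  SimpleGraph.fromRel fun p q =>
    match p, q with
    | Sum.inl i, Sum.inr (Sum.inl j) => G.Adj i j ∨ i = j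
    | Sum.inl i, Sum.inr (Sum.inr j) => G.Adj i j
    | _, _ => False


/-- For distinct vertices `b 0, …, b (k-1)` of `G`, there exist
`a 0, …, a (k-1)` such that each force `a i → b i` is valid under CCR-Z_ℓ̇ w.r.t.
the blue set `V(G) \ {b i, …, b (k-1)}` iff the reversed sequence
`(b (k-1), …, b 0)` is a dominating sequence of `G`. -/
theorem statement_0 {V : Type*} [Fintype V] (G : SimpleGraph V) (k : ℕ)
    (b : Fin k → V) (hb : Function.Injective b) :
    (∃ a : Fin k → V, ∀ i : Fin k,
        ZelldForce G {v | ∀ j : Fin k, i ≤ j → v ≠ b j} (a i) (b i)) ↔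
      IsDomSeq G (fun i : Fin k => b i.rev) := by
  have symmN : ∀ x u : V, ClosedNbr G x u → ClosedNbr G u x := by
    rintro x u (rfl | h)
    · exact Or.inl rfl
    · exact Or.inr h.symm
  constructor
  · rintro ⟨a, ha⟩
    refine ⟨hb.comp Fin.rev_injective, fun i => ?_⟩
    obtain ⟨h1, h2, h3⟩ := ha i.rev
    refine ⟨a i.rev, symmN _ _ h2, fun j hj hcn => ?_⟩
    have hne : b j.rev ≠ b i.rev := fun h => absurd (hb h) (by
      intro h'; exact absurd (Fin.rev_injective h') (ne_of_lt hj))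
    have := h3 (b j.rev) (symmN _ _ hcn) hne
    exact this j.rev (Fin.rev_le_rev.mpr hj.le) rfl
  · rintro ⟨hinj, hdom⟩
    choose a hN hF using hdom
    refine ⟨fun i => a i.rev, fun i => ?_⟩
    have h1 := hN i.rev
    simp only [Fin.rev_rev] at h1
    refine ⟨fun h => h i le_rfl rfl, symmN _ _ h1, fun u hcn hne j hij huj => ?_⟩
    subst huj
    have hlt : i < j := lt_of_le_of_ne hij (fun h => hne (congrArg b h.symm))
    have h2 := hF i.rev j.rev (Fin.rev_lt_rev.mpr hlt)
    simp only [Fin.rev_rev] at h2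
    exact h2 (symmN _ _ hcn)

end ZFGrundy
end

section
/- Let G be a finite simple graph and (b_1,…,b_k) a sequence of distinct vertices of G. Then there exist vertices a_1,…,a_k of G such that for every i = 1,…,k the force a_i→b_i is valid under CCR-Z_− with respect to the blue set V(G) ∖ {b_i, b_{i+1},…,b_k} if and only if (b_k, b_{k−1},…,b_1) is a total dominating sequence of G. -/
namespace ZFGrundy

variable {V : Type*}

/-- For distinct vertices `b 0, …, b (k-1)` of `G`, there exist
`a 0, …, a (k-1)` such that each force `a i → b i` is valid under CCR-Z_− w.r.t.
the blue set `V(G) \ {b i, …, b (k-1)}` iff the reversed sequence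
`(b (k-1), …, b 0)` is a total dominating sequence of `G`. -/
theorem statement_1 {V : Type*} [Fintype V] (G : SimpleGraph V) (k : ℕ)
    (b : Fin k → V) (hb : Function.Injective b) :
    (∃ a : Fin k → V, ∀ i : Fin k,
        ZminusForce G {v | ∀ j : Fin k, i ≤ j → v ≠ b j} (a i) (b i)) ↔
      IsTotDomSeq G (fun i : Fin k => b i.rev) := by
  constructor
  · rintro ⟨a, ha⟩
    refine ⟨fun i j h => Fin.rev_injective (hb h), fun i => ?_⟩
    obtain ⟨hnot, hadj, hsub⟩ := ha i.rev
    refine ⟨a i.rev, hadj.symm, fun j hj hadj' => ?_⟩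
    have hne : b j.rev ≠ b i.rev := fun h =>
      (ne_of_lt hj) (Fin.rev_injective (hb h))
    exact hsub (b j.rev) hadj'.symm hne j.rev
      (le_of_lt (Fin.rev_lt_rev.mpr hj)) rfl
  · rintro ⟨hinj, hdom⟩
    choose u hu1 hu2 using hdom
    refine ⟨fun i => u i.rev, fun i => ?_⟩
    refine ⟨fun h => h i le_rfl rfl, ?_, ?_⟩
    · have := hu1 i.rev
      simp only [Fin.rev_rev] at this
      exact this.symm
    · intro w hw hne j hij heq
      subst heq
      have hij' : i < j := lt_of_le_of_ne hij fun h => hne (congrArg b h.symm)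
      have h2 := hu2 i.rev j.rev (Fin.rev_lt_rev.mpr hij')
      simp only [Fin.rev_rev] at h2
      exact h2 hw.symm

end ZFGrundy
end

section
/- Let G be a finite simple graph and (b_1,…,b_k) a sequence of distinct vertices of G. Then there exist vertices a_1,…,a_k of G such that for every i = 1,…,k the force a_i→b_i is valid under CCR-Z_L with respect to the blue set V(G) ∖ {b_i, b_{i+1},…,b_k} if and only if (b_k, b_{k−1},…,b_1) is an L-sequence of G. -/
namespace ZFGrundy

variable {V : Type*}

/-- For distinct vertices `b 0, …, b (k-1)` of `G`, there exist
`a 0, …, a (k-1)` such that each force `a i → b i` is valid under CCR-Z_L w.r.t.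
the blue set `V(G) \ {b i, …, b (k-1)}` iff the reversed sequence
`(b (k-1), …, b 0)` is an L-sequence of `G`. -/
theorem statement_2 {V : Type*} [Fintype V] (G : SimpleGraph V) (k : ℕ)
    (b : Fin k → V) (hb : Function.Injective b) :
    (∃ a : Fin k → V, ∀ i : Fin k,
        ZLForce G {v | ∀ j : Fin k, i ≤ j → v ≠ b j} (a i) (b i)) ↔
      IsLSeq G (fun i : Fin k => b i.rev) := by
  constructor
  · rintro ⟨a, ha⟩
    refine ⟨fun i j h => Fin.rev_injective (hb h), fun i => ?_⟩
    rcases ha i.rev with ⟨hne, hnS, hadj, hmem⟩ | ⟨heq, hnS, hcl, hmem⟩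
    · refine ⟨a i.rev, Or.inr hadj.symm, fun j hj hA => ?_⟩
      have h1 : b j.rev ≠ b i.rev := fun h =>
        absurd (Fin.rev_injective (hb h)) (Fin.ne_of_lt hj)
      exact hmem (b j.rev) hA.symm h1 j.rev (le_of_lt (Fin.rev_lt_rev.mpr hj)) rfl
    · refine ⟨b i.rev, Or.inl rfl, fun j hj hA => ?_⟩
      have h1 : b j.rev ≠ b i.rev := fun h =>
        absurd (Fin.rev_injective (hb h)) (Fin.ne_of_lt hj)
      rw [heq] at hmem
      exact hmem (b j.rev) (Or.inr hA.symm) h1 j.rev (le_of_lt (Fin.rev_lt_rev.mpr hj)) rfl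
  · rintro ⟨-, hseq⟩
    choose u hu1 hu2 using hseq
    refine ⟨fun i => u i.rev, fun i => ?_⟩
    have hu1' : ClosedNbr G (b i) (u i.rev) := by
      simpa using hu1 i.rev
    have hnS : b i ∉ {v | ∀ j : Fin k, i ≤ j → v ≠ b j} := fun h => h i le_rfl rfl
    have key : ∀ j : Fin k, i < j → ¬ G.Adj (b j) (u i.rev) := by
      intro j hj
      simpa using hu2 i.rev j.rev (Fin.rev_lt_rev.mpr hj)
    rcases eq_or_ne (u i.rev) (b i) with heq | hne
    · refine Or.inr ⟨heq, hnS, Or.inl heq.symm, fun w hw hwne j hj hwj => ?_⟩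
      have hij : i < j := hj.lt_of_ne fun h => hwne (hwj.trans (congrArg b h.symm))
      rcases hw with h | h
      · exact hwne (h.trans heq)
      · exact key j hij (hwj ▸ h).symm
    · have hadj : G.Adj (b i) (u i.rev) := hu1'.resolve_left hne
      refine Or.inl ⟨hne, hnS, hadj.symm, fun w hw hwne j hj hwj => ?_⟩
      have hij : i < j := hj.lt_of_ne fun h => hwne (hwj.trans (congrArg b h.symm))
      exact key j hij (hwj ▸ hw).symm

end ZFGrundy
end

section
/- For every finite simple graph G on n vertices, Z(G) = n − γ^Z_gr(G). -/
namespace ZFGrundy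

variable {V : Type*}

lemma zfs_to_zseq {V : Type*} [Fintype V] (G : SimpleGraph V) {B : Finset V}
    (h : IsZFS G ZForce B) :
    ∃ k : ℕ, (∃ w : Fin k → V, IsZSeq G w) ∧ B.card + k = Fintype.card V := by
  classical
  obtain ⟨k, b, a, hbinj, hiff, hforce⟩ := h
  have hne : ∀ {i j : Fin k}, i ≠ j → b i ≠ b j := fun h e => h (hbinj e)
  have key : ∀ {i j : Fin k}, i < j → ¬ ClosedNbr G (a i) (b j) := by
    intro i j hij hcn
    have hmem := (hforce i).2.2 (b j) hcn (hne (Fin.ne_of_gt hij))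
    exact hmem j (le_of_lt hij) rfl
  refine ⟨k, ⟨a, ?_, ?_⟩, ?_⟩
  · intro i j hij
    by_contra hijne
    rcases lt_or_gt_of_ne hijne with h' | h'
    · exact key h' (Or.inr (hij ▸ (hforce j).2.1))
    · exact key h' (Or.inr (hij ▸ (hforce i).2.1))
  · intro i
    exact ⟨b i, (hforce i).2.1, fun j hj hcn => key hj hcn⟩
  · have himg : Bᶜ = Finset.image b Finset.univ := by
      ext x
      simp only [Finset.mem_compl, Finset.mem_image, Finset.mem_univ, true_and]
      exact hiff x
    have hc : Bᶜ.card = k := by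
      rw [himg, Finset.card_image_of_injective _ hbinj, Finset.card_univ,
        Fintype.card_fin]
    have := Finset.card_add_card_compl B
    omega

lemma zseq_to_zfs {V : Type*} [Fintype V] (G : SimpleGraph V) {k : ℕ}
    {v : Fin k → V} (h : IsZSeq G v) :
    ∃ B : Finset V, IsZFS G ZForce B ∧ B.card + k = Fintype.card V := by
  classical
  obtain ⟨hvinj, hseq⟩ := h
  choose u hu1 hu2 using hseq
  have huinj : Function.Injective u := by
    intro i j hij
    by_contra hijne
    rcases lt_or_gt_of_ne hijne with h' | h'
    · exact hu2 j i h' (hij ▸ Or.inr (hu1 i))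
    · exact hu2 i j h' (hij.symm ▸ Or.inr (hu1 j))
  refine ⟨Finset.univ \ Finset.image u Finset.univ, ⟨k, u, v, huinj, ?_, ?_⟩, ?_⟩
  · intro x
    simp [Finset.mem_sdiff, Finset.mem_image]
  · intro i
    refine ⟨fun hS => hS i le_rfl rfl, hu1 i, fun w hcn hwne j hj => ?_⟩
    intro he
    rcases eq_or_lt_of_le hj with h' | h'
    · exact hwne (he.trans (congrArg u h'.symm))
    · exact hu2 j i h' (he ▸ hcn)
  · have hk : (Finset.image u Finset.univ).card = k := by
      rw [Finset.card_image_of_injective _ huinj, Finset.card_univ, Fintype.card_fin]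
    rw [Finset.card_sdiff_of_subset (Finset.subset_univ _), Finset.card_univ, hk]
    have : k ≤ Fintype.card V := by
      simpa using Fintype.card_le_of_injective u huinj
    omega

/-- `Z(G) = n - γ^Z_gr(G)` for every finite simple graph `G`
on `n` vertices. -/
theorem statement_3 {V : Type*} [Fintype V] (G : SimpleGraph V) :
    zfNum G ZForce = Fintype.card V - grundyZ G := by
  classical
  set n := Fintype.card V with hn
  have hbdd : BddAbove {k : ℕ | ∃ w : Fin k → V, IsZSeq G w} := by
    refine ⟨n, fun k hk => ?_⟩
    obtain ⟨w, hwinj, _⟩ := hk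
    simpa using Fintype.card_le_of_injective w hwinj
  have h0 : (0 : ℕ) ∈ {k : ℕ | ∃ w : Fin k → V, IsZSeq G w} :=
    ⟨Fin.elim0, fun i => i.elim0, fun i => i.elim0⟩
  have hg : grundyZ G ∈ {k : ℕ | ∃ w : Fin k → V, IsZSeq G w} :=
    Nat.sSup_mem ⟨0, h0⟩ hbdd
  have hzmem : zfNum G ZForce ∈
      {m : ℕ | ∃ B : Finset V, IsZFS G ZForce B ∧ B.card = m} := by
    apply Nat.sInf_mem
    refine ⟨n, Finset.univ, ⟨0, Fin.elim0, Fin.elim0, fun i => i.elim0, ?_,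
      fun i => i.elim0⟩, Finset.card_univ⟩
    intro x
    simp
  obtain ⟨B, hB, hcard⟩ := hzmem
  obtain ⟨k, hkseq, hsum⟩ := zfs_to_zseq G hB
  have hk : k ≤ grundyZ G := le_csSup hbdd hkseq
  obtain ⟨w', hw'⟩ := hg
  obtain ⟨B', hB', hsum'⟩ := zseq_to_zfs G hw'
  have hle : zfNum G ZForce ≤ B'.card := Nat.sInf_le ⟨B', hB', rfl⟩
  omega

end ZFGrundy
end

section
/- For every finite simple graph G on n vertices, Z_ℓ̇(G) = n − γ_gr(G). -/
namespace ZFGrundy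

variable {V : Type*}

lemma dom_to_zfs {V : Type*} [Fintype V] (G : SimpleGraph V) {k : ℕ} (v : Fin k → V)
    (hd : IsDomSeq G v) :
    ∃ B : Finset V, IsZFS G ZelldForce B ∧ B.card = Fintype.card V - k := by
  classical
  obtain ⟨hvinj, h2⟩ := hd
  choose u hu1 hu2 using h2
  have huinj : Function.Injective u := by
    intro i j hij
    by_contra hne
    rcases lt_or_gt_of_ne hne with h | h
    · exact hu2 j i h (hij ▸ hu1 i)
    · exact hu2 i j h (hij ▸ hu1 j)
  refine ⟨(Finset.image u Finset.univ)ᶜ, ⟨k, u, v, huinj, ?_, ?_⟩, ?_⟩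
  · intro w
    simp [Finset.mem_image]
  · intro i
    refine ⟨fun h => h i le_rfl rfl, hu1 i, ?_⟩
    intro w hw hne j hij heq
    rcases lt_or_eq_of_le hij with h | h
    · exact hu2 j i h (heq ▸ hw)
    · exact hne (h ▸ heq)
  · rw [Finset.card_compl, Finset.card_image_of_injective _ huinj]
    simp

lemma zfs_to_dom {V : Type*} [Fintype V] (G : SimpleGraph V) (B : Finset V)
    (hB : IsZFS G ZelldForce B) :
    ∃ (k : ℕ) (v : Fin k → V), IsDomSeq G v ∧ B.card = Fintype.card V - k := by
  classical
  obtain ⟨k, b, a, hbinj, hmem, hforce⟩ := hB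
  have key : ∀ i j : Fin k, j < i → ¬ ClosedNbr G (a j) (b i) := by
    intro i j hji hcn
    have hne : b i ≠ b j := fun h => absurd (hbinj h) (ne_of_gt hji)
    exact (hforce j).2.2 (b i) hcn hne i (le_of_lt hji) rfl
  have hainj : Function.Injective a := by
    intro i j hij
    by_contra hne
    rcases lt_or_gt_of_ne hne with h | h
    · exact key j i h (hij ▸ (hforce j).2.1)
    · exact key i j h (hij ▸ (hforce i).2.1)
  refine ⟨k, a, ⟨hainj, fun i => ⟨b i, (hforce i).2.1, fun j hji => key i j hji⟩⟩, ?_⟩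
  have hcompl : Bᶜ = Finset.image b Finset.univ := by
    ext w
    simp only [Finset.mem_compl, Finset.mem_image, Finset.mem_univ, true_and]
    exact hmem w
  have hk : Bᶜ.card = k := by
    rw [hcompl, Finset.card_image_of_injective _ hbinj]; simp
  have := Finset.card_add_card_compl B
  omega

/-- `Z_ℓ̇(G) = n - γ_gr(G)` for every finite simple graph `G`
on `n` vertices. -/
theorem statement_4 {V : Type*} [Fintype V] (G : SimpleGraph V) :
    zfNum G ZelldForce = Fintype.card V - grundyDom G := by
  classical
  set n := Fintype.card V with hn
  have hbdd : BddAbove {k : ℕ | ∃ v : Fin k → V, IsDomSeq G v} := by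
    refine ⟨n, fun k hk => ?_⟩
    obtain ⟨v, hv, _⟩ := hk
    simpa using Fintype.card_le_of_injective v hv
  have hne : (0 : ℕ) ∈ {k : ℕ | ∃ v : Fin k → V, IsDomSeq G v} :=
    ⟨Fin.elim0, fun x => x.elim0, fun i => i.elim0⟩
  have hγmem : grundyDom G ∈ {k : ℕ | ∃ v : Fin k → V, IsDomSeq G v} :=
    Nat.sSup_mem ⟨0, hne⟩ hbdd
  obtain ⟨v, hv⟩ := hγmem
  obtain ⟨B, hBzfs, hBcard⟩ := dom_to_zfs G v hv
  have hZle : zfNum G ZelldForce ≤ n - grundyDom G :=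
    Nat.sInf_le ⟨B, hBzfs, hBcard⟩
  -- other direction
  have hZne : (zfNum G ZelldForce) ∈
      {m : ℕ | ∃ B : Finset V, IsZFS G ZelldForce B ∧ B.card = m} :=
    Nat.sInf_mem ⟨n - grundyDom G, B, hBzfs, hBcard⟩
  obtain ⟨B', hB'zfs, hB'card⟩ := hZne
  obtain ⟨k, w, hw, hk⟩ := zfs_to_dom G B' hB'zfs
  have hkle : k ≤ grundyDom G := le_csSup hbdd ⟨w, hw⟩
  have := hBcard
  omega

end ZFGrundy
end

section
/- For every finite simple graph G on n vertices, Z_−(G) = n − γ^t_gr(G). -/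
namespace ZFGrundy

variable {V : Type*}

lemma tds_of_zfs {V : Type*} [Fintype V] (G : SimpleGraph V) (B : Finset V)
    (h : IsZFS G ZminusForce B) :
    ∃ k, (∃ v : Fin k → V, IsTotDomSeq G v) ∧ B.card = Fintype.card V - k ∧
      k ≤ Fintype.card V := by
  classical
  obtain ⟨k, b, a, hbinj, hcomp, hforce⟩ := h
  have notadj : ∀ i j : Fin k, j < i → ¬ G.Adj (a j) (b i) := by
    intro i j hji hadj
    have hne : b i ≠ b j := fun h => hji.ne' (hbinj h)
    have h3 := (hforce j).2.2 (b i) hadj hne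
    exact h3 i hji.le rfl
  have hainj : Function.Injective a := by
    intro i j hij
    by_contra hne
    rcases lt_or_gt_of_ne hne with hlt | hlt
    · exact notadj j i hlt (hij ▸ (hforce j).2.1)
    · exact notadj i j hlt (hij ▸ (hforce i).2.1)
  have hcompl : Bᶜ = Finset.image b Finset.univ := by
    ext v
    simp only [Finset.mem_compl, Finset.mem_image, Finset.mem_univ, true_and]
    exact hcomp v
  have hcard : Bᶜ.card = k := by
    rw [hcompl, Finset.card_image_of_injective _ hbinj, Finset.card_univ,
      Fintype.card_fin]
  have hk : k ≤ Fintype.card V := by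
    rw [← hcard]; exact Finset.card_le_univ _
  refine ⟨k, ⟨a, hainj, fun i => ⟨b i, (hforce i).2.1, fun j hj => notadj i j hj⟩⟩, ?_, hk⟩
  rw [Finset.card_compl] at hcard
  rw [← hcard]
  exact (Nat.sub_sub_self (Finset.card_le_univ B)).symm

lemma zfs_of_tds {V : Type*} [Fintype V] (G : SimpleGraph V) {k : ℕ}
    (v : Fin k → V) (h : IsTotDomSeq G v) :
    ∃ B : Finset V, IsZFS G ZminusForce B ∧ B.card = Fintype.card V - k := by
  classical
  obtain ⟨hvinj, hwit⟩ := h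
  choose u hu1 hu2 using hwit
  have huinj : Function.Injective u := by
    intro i j hij
    by_contra hne
    rcases lt_or_gt_of_ne hne with hlt | hlt
    · exact hu2 j i hlt (hij ▸ hu1 i)
    · exact hu2 i j hlt (hij.symm ▸ hu1 j)
  refine ⟨(Finset.image u Finset.univ)ᶜ, ⟨k, u, v, huinj, ?_, ?_⟩, ?_⟩
  · intro w
    simp only [Finset.mem_compl, Finset.mem_image, Finset.mem_univ, true_and, not_not]
  · intro i
    refine ⟨fun hS => hS i le_rfl rfl, hu1 i, ?_⟩
    intro w hadj hne j hij
    rcases eq_or_lt_of_le hij with heq | hlt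
    · intro hw; exact hne (heq ▸ hw)
    · intro hw; exact hu2 j i hlt (hw ▸ hadj)
  · rw [Finset.card_compl, Finset.card_image_of_injective _ huinj, Finset.card_univ,
      Fintype.card_fin]

/-- `Z_−(G) = n - γ^t_gr(G)` for every finite simple graph `G`
on `n` vertices. -/
theorem statement_5 {V : Type*} [Fintype V] (G : SimpleGraph V) :
    zfNum G ZminusForce = Fintype.card V - grundyTot G := by
  classical
  set n := Fintype.card V with hn
  have h0 : (0 : ℕ) ∈ {k : ℕ | ∃ w : Fin k → V, IsTotDomSeq G w} :=
    ⟨Fin.elim0, fun {i} => i.elim0, fun i => i.elim0⟩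
  have hbdd : ∀ k ∈ {k : ℕ | ∃ w : Fin k → V, IsTotDomSeq G w}, k ≤ n := by
    rintro k ⟨w, hwinj, -⟩
    simpa using Fintype.card_le_of_injective w hwinj
  have hmem : grundyTot G ∈ {k : ℕ | ∃ w : Fin k → V, IsTotDomSeq G w} :=
    Nat.sSup_mem ⟨0, h0⟩ ⟨n, hbdd⟩
  obtain ⟨w, hw⟩ := hmem
  obtain ⟨B, hB, hBcard⟩ := zfs_of_tds G w hw
  have hub : zfNum G ZminusForce ≤ n - grundyTot G :=
    Nat.sInf_le ⟨B, hB, hBcard⟩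
  have hlb : n - grundyTot G ≤ zfNum G ZminusForce := by
    have hne : ∃ m, m ∈ {m : ℕ | ∃ B : Finset V, IsZFS G ZminusForce B ∧ B.card = m} := by
      refine ⟨(Finset.univ : Finset V).card, Finset.univ, ⟨0, Fin.elim0, Fin.elim0,
        fun {i} => i.elim0, ?_, fun i => i.elim0⟩, rfl⟩
      intro x
      simp only [Finset.mem_univ, not_true_eq_false, false_iff]
      rintro ⟨i, -⟩
      exact i.elim0
    refine le_csInf hne ?_
    rintro m ⟨B, hB, rfl⟩
    obtain ⟨k, htds, hcard, hk⟩ := tds_of_zfs G B hB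
    have hkle : k ≤ grundyTot G := le_csSup ⟨n, fun x hx => hbdd x hx⟩ htds
    have := Nat.sub_le_sub_left hkle n
    omega
  omega

end ZFGrundy
end

section
/- For every finite simple graph G on n vertices, Z_L(G) = n − γ^L_gr(G). -/
namespace ZFGrundy

variable {V : Type*}

lemma lseq_of_zfs {V : Type*} [Fintype V] (G : SimpleGraph V) (B : Finset V)
    (h : IsZFS G ZLForce B) :
    ∃ (k : ℕ) (w : Fin k → V), IsLSeq G w ∧ k + B.card = Fintype.card V := by
  classical
  obtain ⟨k, b, a, hbinj, hmem, hforce⟩ := h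
  refine ⟨k, fun i => b i.rev, ⟨hbinj.comp Fin.rev_injective, ?_⟩, ?_⟩
  · intro i
    refine ⟨a i.rev, ?_, ?_⟩
    · rcases hforce i.rev with ⟨_, _, h2, _⟩ | ⟨heq, _, _, _⟩
      · exact Or.inr h2.symm
      · exact Or.inl heq
    · intro j hj hadj
      have hlt : i.rev < j.rev := Fin.rev_lt_rev.mpr hj
      have hne : b j.rev ≠ b i.rev := fun e => hlt.ne' (hbinj e)
      rcases hforce i.rev with ⟨_, _, _, h3⟩ | ⟨_, _, _, h3⟩
      · exact h3 (b j.rev) hadj.symm hne j.rev hlt.le rfl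
      · exact h3 (b j.rev) (Or.inr hadj.symm) hne j.rev hlt.le rfl
  · have himg : Finset.univ.image b = Bᶜ := by
      ext x
      simp only [Finset.mem_image, Finset.mem_univ, true_and, Finset.mem_compl]
      exact ((hmem x).symm)
    have hc : (Finset.univ.image b).card = k := by
      rw [Finset.card_image_of_injective _ hbinj, Finset.card_univ, Fintype.card_fin]
    rw [himg] at hc
    have := Finset.card_compl_add_card B
    omega

lemma zfs_of_lseq {V : Type*} [Fintype V] (G : SimpleGraph V) {k : ℕ} (w : Fin k → V)
    (h : IsLSeq G w) :
    ∃ B : Finset V, IsZFS G ZLForce B ∧ B.card + k = Fintype.card V := by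
  classical
  obtain ⟨hinj, hw⟩ := h
  choose u hu1 hu2 using hw
  refine ⟨(Finset.univ.image w)ᶜ, ⟨k, fun i => w i.rev, fun i => u i.rev,
    hinj.comp Fin.rev_injective, ?_, ?_⟩, ?_⟩
  · intro x
    simp only [Finset.mem_compl, not_not, Finset.mem_image, Finset.mem_univ, true_and]
    constructor
    · rintro ⟨l, rfl⟩; exact ⟨l.rev, by rw [Fin.rev_rev]⟩
    · rintro ⟨i, rfl⟩; exact ⟨i.rev, rfl⟩
  · intro i
    set m := i.rev with hm
    have hS : ∀ x : V, (∀ l : Fin k, l ≤ m → x ≠ w l) →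
        x ∈ {v : V | ∀ j : Fin k, i ≤ j → v ≠ w j.rev} := by
      intro x hx j hij
      exact hx j.rev (by rw [hm]; exact Fin.rev_le_rev.mpr hij)
    have hnotmem : w m ∉ {v : V | ∀ j : Fin k, i ≤ j → v ≠ w j.rev} :=
      fun hc => hc i le_rfl rfl
    have hthird : ∀ z, G.Adj (u m) z →
        z ∈ {v : V | ∀ j : Fin k, i ≤ j → v ≠ w j.rev} ∨ z = w m := by
      intro z hz
      by_cases hzm : z = w m
      · exact Or.inr hzm
      refine Or.inl (hS z ?_)
      intro l hl he
      rcases lt_or_eq_of_le hl with hlm | hlm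
      · exact hu2 m l hlm (he ▸ hz).symm
      · exact hzm (by rw [he, hlm])
    by_cases hcase : u m = w m
    · refine Or.inr ⟨hcase, hnotmem, Or.inl hcase.symm, ?_⟩
      intro z hz hne
      rcases hz with hz | hz
      · exact absurd (hz.trans hcase) hne
      · exact (hthird z hz).resolve_right hne
    · refine Or.inl ⟨hcase, hnotmem, ((hu1 m).resolve_left hcase).symm, ?_⟩
      intro z hz hne
      exact (hthird z hz).resolve_right hne
  · have hc : (Finset.univ.image w).card = k := by
      rw [Finset.card_image_of_injective _ hinj, Finset.card_univ, Fintype.card_fin]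
    have := Finset.card_compl_add_card (Finset.univ.image w)
    omega

/-- `Z_L(G) = n - γ^L_gr(G)` for every finite simple graph `G`
on `n` vertices. -/
theorem statement_6 {V : Type*} [Fintype V] (G : SimpleGraph V) :
    zfNum G ZLForce = Fintype.card V - grundyL G := by
  classical
  have hLbdd : BddAbove {k : ℕ | ∃ v : Fin k → V, IsLSeq G v} := by
    refine ⟨Fintype.card V, fun k hk => ?_⟩
    obtain ⟨v, hv, _⟩ := hk
    simpa using Fintype.card_le_of_injective v hv
  have hLne : {k : ℕ | ∃ v : Fin k → V, IsLSeq G v}.Nonempty :=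
    ⟨0, fun i => i.elim0, Function.injective_of_subsingleton _, fun i => i.elim0⟩
  have hZne : {m : ℕ | ∃ B : Finset V, IsZFS G ZLForce B ∧ B.card = m}.Nonempty := by
    refine ⟨Finset.univ.card, Finset.univ, ⟨0, fun i => i.elim0, fun i => i.elim0,
      Function.injective_of_subsingleton _, ?_, fun i => i.elim0⟩, rfl⟩
    intro v
    simp
  -- upper bound: zfNum ≤ n - grundyL
  have hg : grundyL G ∈ {k : ℕ | ∃ v : Fin k → V, IsLSeq G v} :=
    Nat.sSup_mem hLne hLbdd
  obtain ⟨v, hv⟩ := hg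
  obtain ⟨B₁, hB₁, hcard₁⟩ := zfs_of_lseq G v hv
  have hle : zfNum G ZLForce ≤ B₁.card := Nat.sInf_le ⟨B₁, hB₁, rfl⟩
  -- lower bound
  have hz : zfNum G ZLForce ∈
      {m : ℕ | ∃ B : Finset V, IsZFS G ZLForce B ∧ B.card = m} :=
    Nat.sInf_mem hZne
  obtain ⟨B₂, hB₂, hcard₂⟩ := hz
  obtain ⟨k₂, w₂, hw₂, hcard₃⟩ := lseq_of_zfs G B₂ hB₂
  have hk₂ : k₂ ≤ grundyL G := le_csSup hLbdd ⟨w₂, hw₂⟩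
  omega

end ZFGrundy
end

section
/- For every finite simple graph G on n vertices, 2Z(G) ≤ n + Z_−(G). -/
namespace ZFGrundy

variable {V : Type*}

/-- Auxiliary marking function: `markAux p i` is `true` iff `i` should be kept;
an index with a "parent" `j` (`p i = some j`, `i < j`) is kept iff its parent is not. -/
def markAux {k : ℕ} (p : Fin k → Option (Fin k)) (i : Fin k) : Bool :=
  match p i with
  | none => true
  | some j => if _ : i < j then !(markAux p j) else true
termination_by k - i.val
decreasing_by
  have := j.isLt
  have : i.val < j.val := by assumption
  omega

lemma markAux_some {k : ℕ} {p : Fin k → Option (Fin k)} {i j : Fin k}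
    (hij : i < j) (hp : p i = some j) : markAux p i = !markAux p j := by
  rw [markAux, hp]
  simp [hij]

lemma markAux_false {k : ℕ} {p : Fin k → Option (Fin k)} {i : Fin k}
    (h : markAux p i = false) : ∃ j, p i = some j ∧ i < j ∧ markAux p j = true := by
  rw [markAux] at h
  split at h
  · simp at h
  · next j hj =>
    split at h
    · next hij => exact ⟨j, hj, hij, by simpa using h⟩
    · simp at h

/-- `2 Z(G) ≤ n + Z_−(G)` for every finite simple graph `G`
on `n` vertices. -/
theorem statement_7 {V : Type*} [Fintype V] (G : SimpleGraph V) :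
    2 * zfNum G ZForce ≤ Fintype.card V + zfNum G ZminusForce := by
  classical
  set n := Fintype.card V with hn
  -- the defining set for `zfNum G ZminusForce` is nonempty (take `B = univ`)
  have hne : {m : ℕ | ∃ B : Finset V, IsZFS G ZminusForce B ∧ B.card = m}.Nonempty := by
    refine ⟨(Finset.univ : Finset V).card, Finset.univ, ⟨0, Fin.elim0, Fin.elim0, ?_, ?_, ?_⟩, rfl⟩
    · intro i; exact i.elim0
    · intro v
      constructor
      · intro h; exact absurd (Finset.mem_univ v) h
      · rintro ⟨i, -⟩; exact i.elim0
    · intro i; exact i.elim0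
  obtain ⟨B, hB, hcard⟩ := Nat.sInf_mem hne
  obtain ⟨k, b, a, hbinj, hmem, hforce⟩ := hB
  -- `n = B.card + k`
  have hcompl : (Bᶜ : Finset V) = Finset.univ.image b := by
    ext v
    simp only [Finset.mem_compl, Finset.mem_image, Finset.mem_univ, true_and]
    rw [hmem v]
  have hnk : n = B.card + k := by
    have h1 : (Bᶜ : Finset V).card = n - B.card := by
      rw [Finset.card_compl]
    have h2 : (Bᶜ : Finset V).card = k := by
      rw [hcompl, Finset.card_image_of_injective _ hbinj, Finset.card_univ, Fintype.card_fin]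
    have h3 : B.card ≤ n := Finset.card_le_univ B
    omega
  -- the "parent" function
  set p : Fin k → Option (Fin k) := fun i =>
    if h : ∃ j, i < j ∧ a i = b j then some h.choose else none with hp
  have hpspec : ∀ i j, p i = some j → i < j ∧ a i = b j := by
    intro i j hij
    simp only [hp] at hij
    split at hij
    · next h =>
      obtain ⟨hlt, heq⟩ := h.choose_spec
      cases hij
      exact ⟨hlt, heq⟩
    · exact absurd hij (by simp)
  have hpex : ∀ i j, i < j → a i = b j → ∃ j', p i = some j' := by
    intro i j hlt heq
    simp only [hp]
    rw [dif_pos ⟨j, hlt, heq⟩]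
    exact ⟨_, rfl⟩
  -- the parent map is injective where defined
  have hpinj : ∀ i₁ i₂ j, p i₁ = some j → p i₂ = some j → i₁ = i₂ := by
    intro i₁ i₂ j h₁ h₂
    by_contra hne12
    obtain ⟨hl₁, he₁⟩ := hpspec _ _ h₁
    obtain ⟨hl₂, he₂⟩ := hpspec _ _ h₂
    -- wlog i₁ < i₂
    rcases lt_trichotomy i₁ i₂ with hlt | heq | hlt
    · obtain ⟨-, -, hblue⟩ := hforce i₁
      have hadj : G.Adj (a i₁) (b i₂) := by
        rw [he₁, ← he₂]; exact (hforce i₂).2.1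
      have hne' : b i₂ ≠ b i₁ := fun h => hne12 (hbinj h).symm
      exact hblue (b i₂) hadj hne' i₂ (le_of_lt hlt) rfl
    · exact hne12 heq
    · obtain ⟨-, -, hblue⟩ := hforce i₂
      have hadj : G.Adj (a i₂) (b i₁) := by
        rw [he₂, ← he₁]; exact (hforce i₁).2.1
      have hne' : b i₁ ≠ b i₂ := fun h => hne12 (hbinj h)
      exact hblue (b i₁) hadj hne' i₁ (le_of_lt hlt) rfl
  -- the kept indices
  set I : Finset (Fin k) := Finset.univ.filter (fun i => markAux p i = true) with hI
  set m := I.card with hm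
  -- counting: `k ≤ 2 * m`
  have hcount : k ≤ 2 * m := by
    set J : Finset (Fin k) := Finset.univ.filter (fun i => ¬ (markAux p i = true)) with hJ
    have hsum : I.card + J.card = k := by
      rw [hI, hJ, Finset.card_filter_add_card_filter_not, Finset.card_univ,
        Fintype.card_fin]
    have hJI : J.card ≤ I.card := by
      apply Finset.card_le_card_of_injOn (fun i => (p i).getD i)
      · intro i hi
        simp only [hJ, Finset.coe_filter, Set.mem_setOf_eq, Finset.mem_filter, Finset.mem_univ, true_and,
          Bool.not_eq_true] at hi
        obtain ⟨j, hpj, -, hj⟩ := markAux_false hi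
        simp only [hpj, Option.getD_some, hI, Finset.coe_filter, Set.mem_setOf_eq, Finset.mem_filter, Finset.mem_univ, true_and]
        exact hj
      · intro i₁ h₁ i₂ h₂ hgd
        simp only [hJ, Finset.coe_filter, Set.mem_setOf_eq, Finset.mem_univ, true_and,
          Bool.not_eq_true] at h₁ h₂
        obtain ⟨j₁, hpj₁, -, -⟩ := markAux_false h₁
        obtain ⟨j₂, hpj₂, -, -⟩ := markAux_false h₂
        simp only [hpj₁, hpj₂, Option.getD_some] at hgd
        subst hgd
        exact hpinj _ _ _ hpj₁ hpj₂
    omega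
  -- the order embedding enumerating `I`
  set e : Fin m ↪o Fin k := I.orderEmbOfFin rfl with he
  have heI : ∀ t, e t ∈ I := fun t => I.orderEmbOfFin_mem rfl t
  have heI' : ∀ i ∈ I, ∃ t, e t = i := by
    intro i hi
    have : i ∈ Set.range e := by
      rw [Finset.range_orderEmbOfFin]
      exact hi
    exact this
  -- the new zero forcing set
  set B' : Finset V := Finset.univ \ I.image b with hB'
  have hB'zfs : IsZFS G ZForce B' := by
    refine ⟨m, fun t => b (e t), fun t => a (e t), ?_, ?_, ?_⟩
    · exact fun t₁ t₂ h => e.injective (hbinj h)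
    · intro v
      simp only [hB', Finset.mem_sdiff, Finset.mem_univ, true_and, not_not,
        Finset.mem_image]
      constructor
      · rintro ⟨i, hi, rfl⟩
        obtain ⟨t, rfl⟩ := heI' i hi
        exact ⟨t, rfl⟩
      · rintro ⟨t, rfl⟩
        exact ⟨e t, heI t, rfl⟩
    · intro t
      refine ⟨?_, (hforce (e t)).2.1, ?_⟩
      · intro h
        exact h t le_rfl rfl
      · rintro u hcn hneu s hts heq
        -- `u = b (e s)` with `t ≤ s`; since `u ≠ b (e t)`, `t < s`
        have hst : t < s := by
          rcases lt_or_eq_of_le hts with h | h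
          · exact h
          · subst h; exact absurd heq hneu
        have hlt : e t < e s := e.strictMono hst
        rcases hcn with rfl | hadj
        · -- `u = a (e t) = b (e s)`: parent of `e t` is `e s`, contradicting marking
          obtain ⟨j', hpj'⟩ := hpex (e t) (e s) hlt heq
          obtain ⟨hlt', heq'⟩ := hpspec _ _ hpj'
          have hj' : j' = e s := hbinj (heq' ▸ heq)
          subst hj'
          have h1 : markAux p (e t) = true := by
            have := heI t
            simpa [hI] using this
          have h2 : markAux p (e s) = true := by
            have := heI s
            simpa [hI] using this
          have := markAux_some hlt' hpj'
          rw [h1, h2] at this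
          simp at this
        · -- `u` a neighbor of `a (e t)`: contradicts Z₋ validity at step `e t`
          have hblue := (hforce (e t)).2.2 u hadj hneu
          exact hblue (e s) (le_of_lt hlt) heq
  -- conclude
  have hB'card : B'.card = n - m := by
    rw [hB', Finset.card_sdiff_of_subset (Finset.subset_univ _), Finset.card_univ,
      Finset.card_image_of_injective _ hbinj]
  have hZle : zfNum G ZForce ≤ n - m :=
    Nat.sInf_le ⟨B', hB'zfs, hB'card⟩
  have hcard' : B.card = zfNum G ZminusForce := hcard
  omega


end ZFGrundy
end

section
/- For every finite simple graph G on n vertices, 2Z_ℓ̇(G) ≤ n + Z_L(G). -/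
namespace ZFGrundy

variable {V : Type*}

lemma univ_isZFS {V : Type*} [Fintype V] (G : SimpleGraph V)
    (force : SimpleGraph V → Set V → V → V → Prop) :
    IsZFS G force (Finset.univ : Finset V) := by
  refine ⟨0, Fin.elim0, Fin.elim0, fun x => x.elim0, ?_, fun i => i.elim0⟩
  intro v
  constructor
  · intro hv; exact absurd (Finset.mem_univ v) hv
  · rintro ⟨i, -⟩; exact i.elim0

lemma key_lemma {V : Type*} [Fintype V] (G : SimpleGraph V) (B : Finset V)
    (h : IsZFS G ZLForce B) :
    ∃ B' : Finset V, IsZFS G ZelldForce B' ∧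
      2 * B'.card ≤ Fintype.card V + B.card := by
  classical
  obtain ⟨k, b, a, hbinj, hcomp, hforce⟩ := h
  -- A : the set of indices j such that b j performs a force while white
  set A : Finset (Fin k) := Finset.univ.filter (fun j => ∃ i, i < j ∧ a i = b j)
    with hAdef
  have hmemA : ∀ j : Fin k, j ∈ A ↔ ∃ i, i < j ∧ a i = b j := by
    intro j; simp [hAdef]
  -- if j ∈ A, then the force receiving b j has a blue forcer
  have hAnotW : ∀ j ∈ A, ∀ l, j < l → a j ≠ b l := by
    intro j hj l hjl hal
    obtain ⟨i0, hi0j, hai0⟩ := (hmemA j).mp hj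
    rcases hforce i0 with ⟨hne0, hnS0, hadj0, hblue0⟩ | ⟨heq0, -⟩
    · rcases hforce j with ⟨hnej, hnSj, hadjj, hbluej⟩ | ⟨heqj, -⟩
      · -- a j = b l is adjacent to b j, hence adjacent to a i0 = b j
        have hadj' : G.Adj (a i0) (b l) := by
          rw [hai0]; rw [hal] at hadjj; exact hadjj.symm
        have hlne : b l ≠ b i0 := fun he => by
          have := hbinj he; omega
        have := hblue0 (b l) hadj' hlne
        exact this l (le_of_lt (lt_trans hi0j hjl)) rfl
      · -- loop case at j : a j = b j, but a j = b l with l ≠ j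
        have : l = j := hbinj (hal.symm.trans heqj)
        omega
    · -- loop case at i0 : a i0 = b i0, but a i0 = b j with j ≠ i0
      have : j = i0 := hbinj (hai0.symm.trans heq0)
      omega
  -- counting: 2 * A.card ≤ k
  have hcard2 : 2 * A.card ≤ k := by
    have hinjOn : ∀ j ∈ A,
        (if h : ∃ i, i < j ∧ a i = b j then h.choose else j) ∈ Aᶜ := by
      intro j hj
      have hex := (hmemA j).mp hj
      rw [dif_pos hex]
      rw [Finset.mem_compl]
      intro hmem
      exact hAnotW _ hmem j hex.choose_spec.1 hex.choose_spec.2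
    have hcardle : A.card ≤ Aᶜ.card := by
      apply Finset.card_le_card_of_injOn
        (fun j => if h : ∃ i, i < j ∧ a i = b j then h.choose else j) hinjOn
      intro j1 hj1 j2 hj2 heq
      have h1 := (hmemA j1).mp (Finset.mem_coe.mp hj1)
      have h2 := (hmemA j2).mp (Finset.mem_coe.mp hj2)
      simp only [dif_pos h1, dif_pos h2] at heq
      have e1 := h1.choose_spec.2
      have e2 := h2.choose_spec.2
      rw [heq] at e1
      exact hbinj (e1.symm.trans e2)
    have hc : Aᶜ.card = k - A.card := by
      rw [Finset.card_compl, Fintype.card_fin]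
    have hAk : A.card ≤ k := by
      simpa using Finset.card_le_univ A
    omega
  -- n = B.card + k
  have himg : Finset.univ.image b = Bᶜ := by
    ext v
    simp only [Finset.mem_image, Finset.mem_compl]
    constructor
    · rintro ⟨i, -, rfl⟩; exact (hcomp (b i)).mpr ⟨i, rfl⟩
    · intro hv; obtain ⟨i, hi⟩ := (hcomp v).mp hv; exact ⟨i, Finset.mem_univ i, hi⟩
  have hnk : Fintype.card V = B.card + k := by
    have h1 : (Finset.univ.image b).card = k := by
      rw [Finset.card_image_of_injective _ hbinj, Finset.card_univ,
        Fintype.card_fin]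
    have h2 : Bᶜ.card = Fintype.card V - B.card := Finset.card_compl B
    have h3 : B.card ≤ Fintype.card V := Finset.card_le_univ B
    rw [himg] at h1
    omega
  -- the new zero forcing set
  refine ⟨B ∪ A.image b, ?_, ?_⟩
  swap
  · -- cardinality bound
    have hdisj : Disjoint B (A.image b) := by
      rw [Finset.disjoint_right]
      intro x hx
      obtain ⟨j, -, rfl⟩ := Finset.mem_image.mp hx
      exact (hcomp (b j)).mpr ⟨j, rfl⟩
    have hcu : (B ∪ A.image b).card = B.card + (A.image b).card :=
      Finset.card_union_of_disjoint hdisj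
    have hci : (A.image b).card = A.card :=
      Finset.card_image_of_injective _ hbinj
    omega
  -- IsZFS
  set I : Finset (Fin k) := Aᶜ with hIdef
  set e := I.orderIsoOfFin rfl with hedef
  refine ⟨I.card, fun i => b (e i), fun i => a (e i), ?_, ?_, ?_⟩
  · intro x y hxy
    exact e.injective (Subtype.val_injective (hbinj hxy))
  · intro v
    constructor
    · intro hv
      rw [Finset.mem_union, not_or] at hv
      obtain ⟨hvB, hvA⟩ := hv
      obtain ⟨i, hi⟩ := (hcomp v).mp hvB
      have hiI : i ∈ I := by
        rw [hIdef, Finset.mem_compl]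
        intro hiA
        exact hvA (Finset.mem_image.mpr ⟨i, hiA, hi⟩)
      obtain ⟨i', hi'⟩ := e.surjective ⟨i, hiI⟩
      exact ⟨i', by show b (e i' : Fin k) = v; rw [hi']; exact hi⟩
    · rintro ⟨i', rfl⟩
      rw [Finset.mem_union, not_or]
      constructor
      · exact (hcomp _).mpr ⟨e i', rfl⟩
      · intro hmem
        obtain ⟨j, hjA, hjb⟩ := Finset.mem_image.mp hmem
        have hje : j = (e i' : Fin k) := hbinj hjb
        have hiI : (e i' : Fin k) ∈ I := (e i').2
        exact Finset.mem_compl.mp hiI (hje ▸ hjA)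
  · intro i'
    set i : Fin k := (e i' : Fin k) with hi_def
    have hiI : i ∈ I := (e i').2
    set S' : Set V := {v | ∀ j' : Fin I.card, i' ≤ j' → v ≠ b (e j')} with hS'def
    have hSsub : {v | ∀ j : Fin k, i ≤ j → v ≠ b j} ⊆ S' := by
      intro v hv j' hle
      have : (e i' : Fin k) ≤ (e j' : Fin k) := e.monotone hle
      exact hv (e j') this
    have hbA : ∀ j ∈ A, b j ∈ S' := by
      intro j hj j' _ heq
      have hje : j = (e j' : Fin k) := hbinj heq
      have h2 : (e j' : Fin k) ∈ I := (e j').2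
      exact Finset.mem_compl.mp h2 (hje ▸ hj)
    have hbiout : b i ∉ S' := fun hmem => hmem i' le_rfl rfl
    rcases hforce i with ⟨hne, hnS, hadj, hblue⟩ | ⟨heq, hnS, hcn, hblue⟩
    · refine ⟨hbiout, Or.inr hadj, ?_⟩
      intro u hu hune
      rcases hu with rfl | hadj'
      · -- u = a i : show a i ∈ S'
        by_cases hs : a i ∈ {v | ∀ j : Fin k, i ≤ j → v ≠ b j}
        · exact hSsub hs
        · simp only [Set.mem_setOf_eq, not_forall] at hs
          obtain ⟨j, hij, haj⟩ := hs
          rw [not_not] at haj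
          have hij' : i < j := lt_of_le_of_ne hij (fun he => hne (he ▸ haj))
          have hjA : j ∈ A := (hmemA j).mpr ⟨i, hij', haj⟩
          show a i ∈ S'
          rw [haj]
          exact hbA j hjA
      · exact hSsub (hblue u hadj' hune)
    · exact ⟨hbiout, hcn, fun u hu hune => hSsub (hblue u hu hune)⟩

/-- `2 Z_ℓ̇(G) ≤ n + Z_L(G)` for every finite simple graph `G`
on `n` vertices. -/
theorem statement_8 {V : Type*} [Fintype V] (G : SimpleGraph V) :
    2 * zfNum G ZelldForce ≤ Fintype.card V + zfNum G ZLForce := by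
  classical
  have hne : {m : ℕ | ∃ B : Finset V, IsZFS G ZLForce B ∧ B.card = m}.Nonempty :=
    ⟨(Finset.univ : Finset V).card, Finset.univ, univ_isZFS G ZLForce, rfl⟩
  obtain ⟨B, hB, hBcard⟩ := Nat.sInf_mem hne
  obtain ⟨B', hB', hB'card⟩ := key_lemma G B hB
  have hle : zfNum G ZelldForce ≤ B'.card :=
    Nat.sInf_le ⟨B', hB', rfl⟩
  have : zfNum G ZLForce = B.card := hBcard.symm
  omega

end ZFGrundy
end

section
/- If a finite simple graph G has at least one edge, then Z_L(G) + 1 ≤ Z_ℓ̇(G). -/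
namespace ZFGrundy

variable {V : Type*}

lemma zelld_zl {G : SimpleGraph V} {S : Set V} {x y : V}
    (h : ZelldForce G S x y) : ZLForce G S x y := by
  obtain ⟨h1, h2, h3⟩ := h
  by_cases hxy : x = y
  · exact Or.inr ⟨hxy, h1, h2, h3⟩
  · refine Or.inl ⟨hxy, h1, ?_, fun u hu hne => h3 u (Or.inr hu) hne⟩
    rcases h2 with h2 | h2
    · exact absurd h2.symm hxy
    · exact h2

lemma prepend [DecidableEq V] {G : SimpleGraph V} {B : Finset V} {k : ℕ}
    {b a : Fin k → V}
    (hinj : Function.Injective b)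
    (henum : ∀ v, v ∉ B ↔ ∃ i, b i = v)
    (hforce : ∀ i : Fin k, ZLForce G {v | ∀ j : Fin k, i ≤ j → v ≠ b j} (a i) (b i))
    {c x : V} (hc : c ∈ B)
    (hx : ZLForce G {v : V | v ∈ B ∧ v ≠ c} x c) :
    IsZFS G ZLForce (B.erase c) := by
  have hbnotB : ∀ i, b i ∉ B := fun i => (henum (b i)).mpr ⟨i, rfl⟩
  refine ⟨k + 1, Fin.cons c b, Fin.cons x a, ?_, ?_, ?_⟩
  · rw [Fin.cons_injective_iff]
    refine ⟨?_, hinj⟩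
    rintro ⟨i, hi⟩
    exact hbnotB i (hi ▸ hc)
  · intro v
    simp only [Finset.mem_erase, not_and_or, not_not, Fin.exists_fin_succ,
      Fin.cons_zero, Fin.cons_succ]
    constructor
    · rintro (h | h)
      · exact Or.inl h.symm
      · exact Or.inr ((henum v).mp h)
    · rintro (h | h)
      · exact Or.inl h.symm
      · exact Or.inr ((henum v).mpr h)
  · intro i
    refine Fin.cases ?_ ?_ i
    · have hset : {v | ∀ j : Fin (k+1), (0 : Fin (k+1)) ≤ j → v ≠ Fin.cons c b j}
          = {v : V | v ∈ B ∧ v ≠ c} := by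
        ext v
        simp only [Set.mem_setOf_eq]
        constructor
        · intro h
          refine ⟨?_, ?_⟩
          · by_contra hvB
            obtain ⟨i, hi⟩ := (henum v).mp hvB
            have := h i.succ (Fin.zero_le _)
            rw [Fin.cons_succ] at this
            exact this hi.symm
          · have := h 0 (Fin.zero_le _)
            rwa [Fin.cons_zero] at this
        · rintro ⟨hvB, hvc⟩ j _
          refine Fin.cases ?_ ?_ j
          · rw [Fin.cons_zero]; exact hvc
          · intro p
            rw [Fin.cons_succ]
            intro hv
            exact hbnotB p (hv ▸ hvB)
      rw [Fin.cons_zero, Fin.cons_zero, hset]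
      exact hx
    · intro p
      have hset : {v | ∀ j : Fin (k+1), p.succ ≤ j → v ≠ Fin.cons c b j}
          = {v | ∀ q : Fin k, p ≤ q → v ≠ b q} := by
        ext v
        simp only [Set.mem_setOf_eq]
        constructor
        · intro h q hpq
          have := h q.succ (by rwa [Fin.succ_le_succ_iff])
          rwa [Fin.cons_succ] at this
        · intro h j
          refine Fin.cases ?_ ?_ j
          · intro h0
            exact absurd h0 (by simp [Fin.le_def])
          · intro q hq
            rw [Fin.cons_succ]
            exact h q (Fin.succ_le_succ_iff.mp hq)
      rw [Fin.cons_succ, Fin.cons_succ, hset]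
      exact hforce p

lemma tail_data [DecidableEq V] {G : SimpleGraph V} {B : Finset V} {k : ℕ}
    {b a : Fin (k + 1) → V}
    (hinj : Function.Injective b)
    (henum : ∀ v, v ∉ B ↔ ∃ i, b i = v)
    (hforce : ∀ i : Fin (k+1),
      ZelldForce G {v | ∀ j : Fin (k+1), i ≤ j → v ≠ b j} (a i) (b i)) :
    Function.Injective (fun i : Fin k => b i.succ) ∧
    (∀ v, v ∉ insert (b 0) B ↔ ∃ i : Fin k, b i.succ = v) ∧
    (∀ i : Fin k, ZelldForce G {v | ∀ j : Fin k, i ≤ j → v ≠ b j.succ}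
      (a i.succ) (b i.succ)) := by
  refine ⟨fun i j h => Fin.succ_injective _ (hinj h), ?_, ?_⟩
  · intro v
    simp only [Finset.mem_insert, not_or]
    constructor
    · rintro ⟨hv0, hvB⟩
      obtain ⟨j, hj⟩ := (henum v).mp hvB
      rcases Fin.eq_zero_or_eq_succ j with rfl | ⟨i, rfl⟩
      · exact absurd hj.symm hv0
      · exact ⟨i, hj⟩
    · rintro ⟨i, hi⟩
      constructor
      · intro h
        have : b i.succ = b 0 := by rw [hi, h]
        exact Fin.succ_ne_zero i (hinj this)
      · exact (henum v).mpr ⟨i.succ, hi⟩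
  · intro i
    have hset : {v | ∀ j : Fin k, i ≤ j → v ≠ b j.succ}
        = {v | ∀ j : Fin (k+1), i.succ ≤ j → v ≠ b j} := by
      ext v
      simp only [Set.mem_setOf_eq]
      constructor
      · intro h j
        refine Fin.cases ?_ ?_ j
        · intro h0
          exact absurd h0 (by simp [Fin.le_def])
        · intro q hq
          exact h q (Fin.succ_le_succ_iff.mp hq)
      · intro h q hq
        exact h q.succ (Fin.succ_le_succ_iff.mpr hq)
    rw [hset]
    exact hforce i.succ

lemma key [DecidableEq V] {G : SimpleGraph V} {u w : V} (huw : G.Adj u w) :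
    ∀ (k : ℕ) (B : Finset V) (b a : Fin k → V), Function.Injective b →
      (∀ v, v ∉ B ↔ ∃ i, b i = v) →
      (∀ i : Fin k, ZelldForce G {v | ∀ j : Fin k, i ≤ j → v ≠ b j} (a i) (b i)) →
      ∃ c ∈ B, (∃ z, G.Adj c z) ∧ IsZFS G ZLForce (B.erase c) := by
  intro k
  induction k with
  | zero =>
    intro B b a hinj henum hforce
    have hall : ∀ v, v ∈ B := fun v => by
      by_contra h
      obtain ⟨i, _⟩ := (henum v).mp h
      exact i.elim0
    refine ⟨u, hall u, ⟨w, huw⟩, ?_⟩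
    refine prepend (x := u) hinj henum (fun i => zelld_zl (hforce i)) (hall u) ?_
    exact Or.inr ⟨rfl, fun h => h.2 rfl, Or.inl rfl, fun v _ hne => ⟨hall v, hne⟩⟩
  | succ k ih =>
    intro B b a hinj henum hforce
    have hbnotB : ∀ i, b i ∉ B := fun i => (henum (b i)).mpr ⟨i, rfl⟩
    obtain ⟨h01, h02, h03⟩ := hforce 0
    have hmem : ∀ v', ClosedNbr G (a 0) v' → v' ≠ b 0 → v' ∈ B := by
      intro v' h1 h2
      have := h03 v' h1 h2
      by_contra hvB
      obtain ⟨i, hi⟩ := (henum v').mp hvB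
      exact this i (Fin.zero_le _) hi.symm
    obtain ⟨hinj', henum', hforce'⟩ := tail_data hinj henum hforce
    by_cases hiso : a 0 = b 0 ∧ ∀ z, ¬ G.Adj (b 0) z
    · -- first force is a loop on an isolated vertex
      obtain ⟨c, hcB₁, hcz, hzfs⟩ := ih (insert (b 0) B) _ _ hinj' henum' hforce'
      have hcb0 : c ≠ b 0 := by
        rintro rfl
        obtain ⟨z, hz⟩ := hcz
        exact hiso.2 z hz
      have hcB : c ∈ B := by
        rcases Finset.mem_insert.mp hcB₁ with h | h
        · exact absurd h hcb0
        · exact h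
      have hEq : (insert (b 0) B).erase c = insert (b 0) (B.erase c) :=
        Finset.erase_insert_of_ne (Ne.symm hcb0)
      obtain ⟨k', b', a', hI, hE, hF⟩ := hzfs
      have hb0' : b 0 ∈ (insert (b 0) B).erase c := by
        rw [hEq]; exact Finset.mem_insert_self _ _
      have hloop : ZLForce G {v : V | v ∈ (insert (b 0) B).erase c ∧ v ≠ b 0}
          (b 0) (b 0) := by
        refine Or.inr ⟨rfl, fun h => h.2 rfl, Or.inl rfl, fun v' hv' hne => ?_⟩
        rcases hv' with h | h
        · exact absurd h hne
        · exact absurd h (hiso.2 v')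
      have h2 := prepend hI hE hF hb0' hloop
      have hEq2 : ((insert (b 0) B).erase c).erase (b 0) = B.erase c := by
        rw [hEq, Finset.erase_insert]
        simp [hbnotB 0]
      rw [hEq2] at h2
      exact ⟨c, hcB, hcz, h2⟩
    · push_neg at hiso
      by_cases hab : a 0 = b 0
      · -- first force is a loop on a non-isolated vertex
        obtain ⟨z, hz⟩ := hiso hab
        have hNB : ∀ v', G.Adj (b 0) v' → v' ∈ B := by
          intro v' hv'
          exact hmem v' (Or.inr (hab ▸ hv')) hv'.ne'
        refine ⟨z, hNB z hz, ⟨b 0, hz.symm⟩, ?_⟩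
        refine prepend (x := b 0) hinj henum (fun i => zelld_zl (hforce i)) (hNB z hz) ?_
        exact Or.inl ⟨hz.ne, fun h => h.2 rfl, hz,
          fun v' hv' hne => ⟨hNB v' hv', hne⟩⟩
      · -- first force is a standard force
        have hadj : G.Adj (a 0) (b 0) := by
          rcases h02 with h | h
          · exact absurd h.symm hab
          · exact h
        have ha0B : a 0 ∈ B := hmem (a 0) (Or.inl rfl) hab
        have hNB : ∀ v', G.Adj (a 0) v' → v' ≠ b 0 → v' ∈ B :=
          fun v' h1 h2 => hmem v' (Or.inr h1) h2
        have hb0a0 : b 0 ≠ a 0 := Ne.symm hab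
        have ha0mem : a 0 ∈ insert (b 0) B := Finset.mem_insert_of_mem ha0B
        have hloop : ZLForce G {v : V | v ∈ insert (b 0) B ∧ v ≠ a 0}
            (a 0) (a 0) := by
          refine Or.inr ⟨rfl, fun h => h.2 rfl, Or.inl rfl, fun v' hv' hne => ?_⟩
          rcases hv' with h | h
          · exact absurd h hne
          · by_cases hvb : v' = b 0
            · exact ⟨hvb ▸ Finset.mem_insert_self _ _, hne⟩
            · exact ⟨Finset.mem_insert_of_mem (hNB v' h hvb), hne⟩
        have h1 := prepend hinj' henum' (fun i => zelld_zl (hforce' i)) ha0mem hloop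
        obtain ⟨k'', b'', a'', hI, hE, hF⟩ := h1
        have hb0mem : b 0 ∈ (insert (b 0) B).erase (a 0) :=
          Finset.mem_erase.mpr ⟨hb0a0, Finset.mem_insert_self _ _⟩
        have hx2 : ZLForce G {v : V | v ∈ (insert (b 0) B).erase (a 0) ∧ v ≠ b 0}
            (a 0) (b 0) := by
          refine Or.inl ⟨hab, fun h => h.2 rfl, hadj, fun v' hv' hne => ?_⟩
          refine ⟨Finset.mem_erase.mpr ⟨hv'.ne', Finset.mem_insert_of_mem (hNB v' hv' hne)⟩, hne⟩
        have h2 := prepend hI hE hF hb0mem hx2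
        have hEq2 : ((insert (b 0) B).erase (a 0)).erase (b 0) = B.erase (a 0) := by
          rw [Finset.erase_insert_of_ne (Ne.symm hab), Finset.erase_insert]
          simp [hbnotB 0]
        rw [hEq2] at h2
        exact ⟨a 0, ha0B, ⟨b 0, hadj⟩, h2⟩

/-- if `G` has at least one edge then `Z_L(G) + 1 ≤ Z_ℓ̇(G)`. -/
theorem statement_9 {V : Type*} [Fintype V] (G : SimpleGraph V)
    (hedge : ∃ u w : V, G.Adj u w) :
    zfNum G ZLForce + 1 ≤ zfNum G ZelldForce := by
  classical
  have hne : (Finset.univ : Finset V).card ∈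
      {m : ℕ | ∃ B : Finset V, IsZFS G ZelldForce B ∧ B.card = m} := by
    refine ⟨Finset.univ, ⟨0, Fin.elim0, Fin.elim0, ?_, ?_, fun i => i.elim0⟩, rfl⟩
    · intro i; exact i.elim0
    · intro v
      constructor
      · intro h; exact absurd (Finset.mem_univ v) h
      · rintro ⟨i, _⟩; exact i.elim0
  have hmem := Nat.sInf_mem ⟨_, hne⟩
  obtain ⟨B, hB, hcard⟩ := hmem
  obtain ⟨u, w0, huw⟩ := hedge
  obtain ⟨k, b, a, h1, h2, h3⟩ := hB
  obtain ⟨c, hcB, _, hzfs⟩ := key huw k B b a h1 h2 h3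
  have hle : zfNum G ZLForce ≤ (B.erase c).card :=
    Nat.sInf_le ⟨B.erase c, hzfs, rfl⟩
  have hcard' : (B.erase c).card = B.card - 1 := Finset.card_erase_of_mem hcB
  have hpos : 1 ≤ B.card := Finset.card_pos.mpr ⟨c, hcB⟩
  have : zfNum G ZelldForce = B.card := hcard.symm
  omega

end ZFGrundy
end

section
/- Let G be a finite simple graph on n vertices with no isolated vertices. Then Z(G) ≤ n − γ(G), where γ(G) is the domination number of G. -/
namespace ZFGrundy

variable {V : Type*}

/-- if `G` is a finite simple graph on `n` vertices without isolated
vertices, then `Z(G) ≤ n - γ(G)`. -/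
theorem statement_10 {V : Type*} [Fintype V] (G : SimpleGraph V)
    (hiso : ∀ v : V, ∃ u : V, G.Adj v u) :
    zfNum G ZForce ≤ Fintype.card V - domNum G := by
  classical
  set T : Set ℕ := {k : ℕ | ∃ v : Fin k → V, IsZSeq G v} with hT
  have hbdd : BddAbove T := by
    refine ⟨Fintype.card V, fun k hk => ?_⟩
    obtain ⟨v, hv⟩ := hk
    simpa using Fintype.card_le_of_injective v hv.1
  have h0 : (0 : ℕ) ∈ T := ⟨fun i => i.elim0, fun a b _ => a.elim0, fun i => i.elim0⟩
  set k := sSup T with hk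
  have hkT : k ∈ T := Nat.sSup_mem ⟨0, h0⟩ hbdd
  obtain ⟨v, hvinj, hvseq⟩ := hkT
  -- maximality: every edge endpoint is in some closed neighborhood
  have hmax : ∀ w u : V, G.Adj w u → ∃ j, ClosedNbr G (v j) u := by
    by_contra h
    push_neg at h
    obtain ⟨w, u, hwu, hnot⟩ := h
    have hwv : ∀ j, w ≠ v j := by
      intro j hj
      exact hnot j (Or.inr (hj ▸ hwu))
    set v' : Fin (k + 1) → V := fun i => if h : (i : ℕ) < k then v ⟨i, h⟩ else w with hv'
    have hmem : k + 1 ∈ T := by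
      refine ⟨v', ?_, ?_⟩
      · intro a b hab
        by_cases ha : (a : ℕ) < k <;> by_cases hb : (b : ℕ) < k <;>
          simp only [hv', ha, hb, dif_pos, dif_neg, dite_true, dite_false] at hab
        · exact Fin.ext (congrArg Fin.val (hvinj hab) : _)
        · exact absurd hab.symm (hwv _)
        · exact absurd hab (hwv _)
        · exact Fin.ext (by omega)
      · intro i
        by_cases hi : (i : ℕ) < k
        · obtain ⟨x, hx1, hx2⟩ := hvseq ⟨i, hi⟩
          refine ⟨x, by simpa [hv', hi] using hx1, ?_⟩
          intro j hj
          have hjk : (j : ℕ) < k := lt_of_lt_of_le hj (by exact_mod_cast Nat.le_of_lt_succ (by omega))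
          have := hx2 ⟨j, hjk⟩ (by simpa using hj)
          simpa [hv', hjk] using this
        · refine ⟨u, by simpa [hv', hi] using hwu, ?_⟩
          intro j hj
          have hjk : (j : ℕ) < k := by omega
          simpa [hv', hjk] using hnot ⟨j, hjk⟩
    have := le_csSup hbdd hmem
    omega
  -- the sequence vertices form a dominating set
  have hdom : domNum G ≤ k := by
    apply Nat.sInf_le
    refine ⟨Finset.image v Finset.univ, ?_, ?_⟩
    · intro x hx
      obtain ⟨y, hy⟩ := hiso x
      obtain ⟨j, hj⟩ := hmax y x (hy.symm)
      rcases hj with hj | hj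
      · exact absurd (Finset.mem_image.2 ⟨j, Finset.mem_univ j, hj.symm⟩) hx
      · exact ⟨v j, Finset.mem_image.2 ⟨j, Finset.mem_univ j, rfl⟩, hj.symm⟩
    · rw [Finset.card_image_of_injective _ hvinj, Finset.card_univ, Fintype.card_fin]
  -- witnesses
  choose u hu1 hu2 using hvseq
  have huinj : Function.Injective u := by
    intro a b hab
    by_contra hne
    rcases lt_or_gt_of_ne (fun h : a = b => hne h) with h | h
    · exact hu2 b a h (hab ▸ Or.inr (hu1 a))
    · exact hu2 a b h (hab ▸ Or.inr (hu1 b))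
  -- zero forcing set
  have hzfs : IsZFS G ZForce (Finset.univ \ Finset.image u Finset.univ) := by
    refine ⟨k, u, v, huinj, ?_, ?_⟩
    · intro x
      simp [Finset.mem_sdiff, Finset.mem_image]
    · intro i
      refine ⟨?_, hu1 i, ?_⟩
      · intro hS
        exact hS i le_rfl rfl
      · intro x hx hxi j hij
        rcases eq_or_lt_of_le hij with h | h
        · exact fun hxj => hxi (h ▸ hxj)
        · intro hxj
          exact hu2 j i h (hxj ▸ hx)
  have hcard : (Finset.univ \ Finset.image u Finset.univ).card = Fintype.card V - k := by
    rw [Finset.card_sdiff_of_subset (Finset.subset_univ _), Finset.card_univ,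
      Finset.card_image_of_injective _ huinj, Finset.card_univ, Fintype.card_fin]
  have hz : zfNum G ZForce ≤ Fintype.card V - k :=
    Nat.sInf_le ⟨_, hzfs, hcard⟩
  exact le_trans hz (Nat.sub_le_sub_left hdom _)

end ZFGrundy
end

section
/- For every finite simple graph G, γ^Z_gr(G) ≤ mr(G); that is, every Z-sequence of G has length at most the rank of every matrix in S(G). -/
namespace ZFGrundy

variable {V : Type*}

/-- `γ^Z_gr(G) ≤ mr(G)`: every Z-sequence of `G` has length at most
the rank of every matrix in `S(G)`. -/
theorem statement_11 {V : Type*} [Fintype V] (G : SimpleGraph V)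
    (k : ℕ) (v : Fin k → V) (hv : IsZSeq G v)
    (A : Matrix V V ℝ) (hA : A ∈ SFam G) :
    k ≤ A.rank := by
  classical
  choose u hu hu2 using hv.2
  -- the k×k matrix B i j = A (v i) (u j)
  set B : Matrix (Fin k) (Fin k) ℝ := Matrix.of fun i j => A (v i) (u j) with hB
  have hzero : ∀ i j : Fin k, i < j → B i j = 0 := by
    intro i j hij
    have h := hu2 j i hij
    have hne : v i ≠ u j := fun h' => h (Or.inl h'.symm)
    have hadj : ¬ G.Adj (v i) (u j) := fun h' => h (Or.inr h')
    by_contra h0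
    exact hadj ((hA.2 (v i) (u j) hne).mp h0)
  have hdiag : ∀ i : Fin k, B i i ≠ 0 := by
    intro i
    exact (hA.2 (v i) (u i) (hu i).ne).mpr (hu i)
  have hdet : B.det ≠ 0 := by
    have htri : B.BlockTriangular OrderDual.toDual := by
      intro i j h
      exact hzero i j h
    rw [Matrix.det_of_lowerTriangular B htri]
    exact Finset.prod_ne_zero_iff.mpr fun i _ => hdiag i
  have hBrank : B.rank = k := by
    rw [Matrix.rank_of_isUnit B ((Matrix.isUnit_iff_isUnit_det B).mpr hdet.isUnit)]
    simp
  -- B = P * A * Q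
  set P : Matrix (Fin k) V ℝ := Matrix.of fun i x => if x = v i then 1 else 0 with hP
  set Q : Matrix V (Fin k) ℝ := Matrix.of fun x j => if x = u j then 1 else 0 with hQ
  have hfac : B = P * A * Q := by
    ext i j
    simp only [hB, hP, hQ, Matrix.mul_apply, Matrix.of_apply]
    simp [Finset.sum_ite_eq', ite_mul, mul_ite]
  calc (k : ℕ) = B.rank := hBrank.symm
    _ ≤ (P * A).rank := hfac ▸ Matrix.rank_mul_le_left _ _
    _ ≤ A.rank := Matrix.rank_mul_le_right _ _

end ZFGrundy
end

section
/- For every finite simple graph G, γ_gr(G) ≤ mr_ℓ̇(G); that is, every dominating sequence of G has length at most the rank of every matrix in S_ℓ̇(G). -/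
namespace ZFGrundy

variable {V : Type*}

/-- `γ_gr(G) ≤ mr_ℓ̇(G)`: every dominating sequence of `G` has length
at most the rank of every matrix in `S_ℓ̇(G)`. -/
theorem statement_12 {V : Type*} [Fintype V] (G : SimpleGraph V)
    (k : ℕ) (v : Fin k → V) (hv : IsDomSeq G v)
    (A : Matrix V V ℝ) (hA : A ∈ SldFam G) :
    k ≤ A.rank := by
  classical
  obtain ⟨⟨hsym, hadj⟩, hdiag⟩ := hA
  obtain ⟨-, hseq⟩ := hv
  choose u hu1 hu2 using hseq
  set M : Matrix (Fin k) (Fin k) ℝ := A.submatrix v u with hM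
  -- entries above diagonal vanish
  have hzero : ∀ i j : Fin k, i < j → M i j = 0 := by
    intro i j hij
    have h := hu2 j i hij
    simp only [ClosedNbr, not_or] at h
    have hne : v i ≠ u j := fun h' => h.1 h'.symm
    have := hadj (v i) (u j) hne
    simpa [hM, Matrix.submatrix_apply] using (not_imp_not.mpr this.mp) h.2
  -- diagonal entries nonzero
  have hdiagM : ∀ i : Fin k, M i i ≠ 0 := by
    intro i
    rcases hu1 i with h | h
    · simp only [hM, Matrix.submatrix_apply, h]; exact hdiag (v i)
    · exact (hadj (v i) (u i) h.ne).mpr h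
  -- M is invertible
  have htri : M.transpose.BlockTriangular id := by
    intro i j hij
    exact hzero j i hij
  have hdet : M.det ≠ 0 := by
    rw [← Matrix.det_transpose M, Matrix.det_of_upperTriangular htri]
    exact Finset.prod_ne_zero_iff.mpr fun i _ => hdiagM i
  have hrankM : M.rank = k := by
    rw [Matrix.rank_of_isUnit M ((Matrix.isUnit_iff_isUnit_det M).mpr hdet.isUnit)]
    simp
  -- M = P * (A * Q)
  set P : Matrix (Fin k) V ℝ := Matrix.of fun i x => if v i = x then (1:ℝ) else 0 with hP
  set Q : Matrix V (Fin k) ℝ := Matrix.of fun x j => if x = u j then (1:ℝ) else 0 with hQ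
  have hfact : M = P * (A * Q) := by
    ext i j
    simp [hM, hP, hQ, Matrix.mul_apply, Finset.sum_ite_eq, Finset.sum_ite_eq',
      mul_ite, mul_one, mul_zero, ite_mul, one_mul, zero_mul]
  calc k = M.rank := hrankM.symm
    _ ≤ (A * Q).rank := hfact ▸ Matrix.rank_mul_le_right P (A * Q)
    _ ≤ A.rank := Matrix.rank_mul_le_left A Q


end ZFGrundy
end

section
/- For every finite simple graph G, γ^t_gr(G) ≤ mr_0(G); that is, every total dominating sequence of G has length at most the rank of every matrix in S_0(G). -/
namespace ZFGrundy

variable {V : Type*}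

/-- `γ^t_gr(G) ≤ mr_0(G)`: every total dominating sequence of `G` has
length at most the rank of every matrix in `S_0(G)`. -/
theorem statement_13 {V : Type*} [Fintype V] (G : SimpleGraph V)
    (k : ℕ) (v : Fin k → V) (hv : IsTotDomSeq G v)
    (A : Matrix V V ℝ) (hA : A ∈ S0Fam G) :
    k ≤ A.rank := by
  classical
  obtain ⟨⟨hsym, hadj⟩, hdiag⟩ := hA
  obtain ⟨hinj, hseq⟩ := hv
  choose u hu1 hu2 using hseq
  have hzero : ∀ i j : Fin k, j < i → A (u i) (v j) = 0 := by
    intro i j hji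
    by_cases h : u i = v j
    · rw [h]; exact hdiag _
    · by_contra hne
      exact hu2 i j hji ((hadj (u i) (v j) h).mp hne).symm
  have hnz : ∀ i : Fin k, A (u i) (v i) ≠ 0 := by
    intro i
    exact (hadj (u i) (v i) (G.ne_of_adj (hu1 i)).symm).mpr (hu1 i).symm
  set w : Fin k → (V → ℝ) := fun i => A.mulVecLin (Pi.single (v i) 1) with hw
  have hwmem : ∀ i, w i ∈ LinearMap.range A.mulVecLin := fun i => ⟨_, rfl⟩
  have hwval : ∀ i x, w i x = A x (v i) := by
    intro i x
    simp [hw, Matrix.mulVecLin, Matrix.mulVec_single]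
  have hli : LinearIndependent ℝ w := by
    rw [Fintype.linearIndependent_iff]
    intro g hg
    have key : ∀ n : ℕ, ∀ i : Fin k, k - i.val ≤ n → g i = 0 := by
      intro n
      induction n with
      | zero => intro i hi; omega
      | succ n ih =>
        intro i hi
        have hgj : ∀ j : Fin k, i < j → g j = 0 := by
          intro j hij
          exact ih j (by omega)
        have hsum := congrFun hg (u i)
        simp only [Finset.sum_apply, Pi.smul_apply, smul_eq_mul, Pi.zero_apply] at hsum
        rw [Finset.sum_eq_single i] at hsum
        · rw [hwval] at hsum
          exact (mul_eq_zero.mp hsum).resolve_right (hnz i)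
        · intro j _ hji
          rcases lt_or_gt_of_ne hji with h | h
          · rw [hwval, hzero i j h, mul_zero]
          · rw [hgj j h, zero_mul]
        · intro h; exact absurd (Finset.mem_univ i) h
    intro i
    exact key k i (by omega)
  have : k ≤ Module.finrank ℝ (LinearMap.range A.mulVecLin) := by
    have hli' : LinearIndependent ℝ (fun i : Fin k =>
        (⟨w i, hwmem i⟩ : LinearMap.range A.mulVecLin)) := by
      apply LinearIndependent.of_comp (LinearMap.range A.mulVecLin).subtype
      exact hli
    simpa using hli'.fintype_card_le_finrank
  exact this

end ZFGrundy
end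

section
/- For every finite simple graph G, every matrix A ∈ S_0(G) satisfies rank(A) ≤ 2β(G), where β(G) is the vertex cover number of G; consequently γ^t_gr(G) ≤ mr_0(G) ≤ 2β(G). -/
namespace ZFGrundy

variable {V : Type*}

open Matrix in
lemma rank_add_le_aux {V : Type*} [Fintype V] [DecidableEq V] (A B : Matrix V V ℝ) :
    (A + B).rank ≤ A.rank + B.rank := by
  have h : LinearMap.range (A + B).mulVecLin ≤
      LinearMap.range A.mulVecLin ⊔ LinearMap.range B.mulVecLin := by
    rw [Matrix.mulVecLin_add]
    rintro x ⟨y, rfl⟩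
    exact Submodule.mem_sup.2 ⟨A.mulVecLin y, ⟨y, rfl⟩, B.mulVecLin y, ⟨y, rfl⟩, rfl⟩
  calc (A + B).rank ≤ Module.finrank ℝ
        (LinearMap.range A.mulVecLin ⊔ LinearMap.range B.mulVecLin : Submodule ℝ (V → ℝ)) :=
        Submodule.finrank_mono h
    _ ≤ A.rank + B.rank := Submodule.finrank_add_le_finrank_add_finrank _ _

lemma rank_le_two_mul_cover {V : Type*} [Fintype V] [DecidableEq V] (G : SimpleGraph V)
    (A : Matrix V V ℝ) (hA : A ∈ S0Fam G) (C : Finset V)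
    (hC : ∀ u w, G.Adj u w → u ∈ C ∨ w ∈ C) : A.rank ≤ 2 * C.card := by
  classical
  set d : V → ℝ := fun i => if i ∈ C then (1 : ℝ) else 0 with hd
  set D : Matrix V V ℝ := Matrix.diagonal d with hD
  have hzero : ∀ i j, i ∉ C → j ∉ C → A i j = 0 := by
    intro i j hi hj
    by_cases hij : i = j
    · subst hij; exact hA.2 i
    · by_contra h
      rcases hC i j ((hA.1.2 i j hij).1 h) with h' | h' <;> simp_all
  have hD2 : A - D * A = (A - D * A) * D := by
    ext i j
    rw [Matrix.mul_diagonal]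
    simp only [Matrix.sub_apply, hD, Matrix.diagonal_mul]
    by_cases hj : j ∈ C
    · simp [d, hj]
    · by_cases hi : i ∈ C
      · simp [d, hi, hj]
      · simp [d, hi, hj, hzero i j hi hj]
  have hDrank : D.rank ≤ C.card := by
    rw [hD, Matrix.rank_diagonal]
    have : Fintype.card {i // d i ≠ 0} = Fintype.card {i // i ∈ C} := by
      apply Fintype.card_congr
      apply Equiv.subtypeEquivRight
      intro i
      by_cases h : i ∈ C <;> simp [d, h]
    rw [this, Fintype.card_coe]
  have h1 : (D * A).rank ≤ C.card := le_trans (Matrix.rank_mul_le_left D A) hDrank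
  have h2 : (A - D * A).rank ≤ C.card := by
    rw [hD2]
    exact le_trans (Matrix.rank_mul_le_right _ D) hDrank
  have : A = D * A + (A - D * A) := by abel
  calc A.rank = (D * A + (A - D * A)).rank := by rw [← this]
    _ ≤ (D * A).rank + (A - D * A).rank := rank_add_le_aux _ _
    _ ≤ C.card + C.card := add_le_add h1 h2
    _ = 2 * C.card := (two_mul _).symm

lemma totdom_le_two_mul_cover {V : Type*} [Fintype V] [DecidableEq V] (G : SimpleGraph V)
    {k : ℕ} (v : Fin k → V) (hv : IsTotDomSeq G v) (C : Finset V)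
    (hC : ∀ u w, G.Adj u w → u ∈ C ∨ w ∈ C) : k ≤ 2 * C.card := by
  classical
  obtain ⟨hinj, hseq⟩ := hv
  choose u hu hu2 using hseq
  set g : Fin k → V := fun i => if v i ∈ C then v i else u i with hg
  have hmem : ∀ i, g i ∈ C := by
    intro i
    by_cases h : v i ∈ C
    · simp [g, h]
    · rcases hC (v i) (u i) (hu i) with h' | h'
      · exact absurd h' h
      · simp [g, h, h']
  have huinj : ∀ i j, v i ∉ C → v j ∉ C → u i = u j → i = j := by
    intro i j _ _ he
    rcases lt_trichotomy i j with h | h | h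
    · exact absurd (he ▸ hu i) (hu2 j i h)
    · exact h
    · exact absurd (he.symm ▸ hu j) (hu2 i j h)
  have key : ∀ b ∈ Finset.univ.image g, ((Finset.univ.filter (fun i => g i = b)).card ≤ 2) := by
    intro b _
    rw [show (2 : ℕ) = Fintype.card Bool by simp]
    apply Finset.card_le_card_of_injOn (fun i => decide (v i ∈ C))
      (fun a _ => Finset.mem_univ _)
    intro i hi j hj he
    simp only [Finset.coe_filter, Set.mem_setOf_eq, Finset.mem_univ, true_and] at hi hj
    by_cases h1 : v i ∈ C <;> by_cases h2 : v j ∈ C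
    · have hgi := hi; have hgj := hj
      simp only [g, if_pos h1, if_pos h2] at hgi hgj
      exact hinj (hgi.trans hgj.symm)
    · simp [h1, h2] at he
    · simp [h1, h2] at he
    · have hgi := hi; have hgj := hj
      simp only [g, if_neg h1, if_neg h2] at hgi hgj
      exact huinj i j h1 h2 (hgi.trans hgj.symm)
  calc k = (Finset.univ : Finset (Fin k)).card := by simp
    _ ≤ 2 * (Finset.univ.image g).card := Finset.card_le_mul_card_image _ 2 key
    _ ≤ 2 * C.card := by
        apply Nat.mul_le_mul_left
        apply Finset.card_le_card
        intro b hb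
        obtain ⟨i, _, rfl⟩ := Finset.mem_image.1 hb
        exact hmem i

/-- every matrix `A ∈ S_0(G)` satisfies `rank A ≤ 2 β(G)`;
consequently `γ^t_gr(G) ≤ mr_0(G) ≤ 2 β(G)`. -/
theorem statement_14 {V : Type*} [Fintype V] (G : SimpleGraph V) :
    (∀ A ∈ S0Fam G, A.rank ≤ 2 * vcNum G) ∧
    (∀ (k : ℕ) (v : Fin k → V), IsTotDomSeq G v → k ≤ 2 * vcNum G) := by
  classical
  have hne : (Finset.univ : Finset V) ∈ {C : Finset V | ∀ u w, G.Adj u w → u ∈ C ∨ w ∈ C} := by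
    intro u w _; left; exact Finset.mem_univ u
  have hSne : {m : ℕ | ∃ C : Finset V, (∀ u w, G.Adj u w → u ∈ C ∨ w ∈ C) ∧ C.card = m}.Nonempty :=
    ⟨(Finset.univ : Finset V).card, Finset.univ, hne, rfl⟩
  obtain ⟨C, hC, hCc⟩ := Nat.sInf_mem hSne
  constructor
  · intro A hA
    calc A.rank ≤ 2 * C.card := rank_le_two_mul_cover G A hA C hC
      _ = 2 * vcNum G := by rw [hCc]; rfl
  · intro k v hv
    calc k ≤ 2 * C.card := totdom_le_two_mul_cover G v hv C hC
      _ = 2 * vcNum G := by rw [hCc]; rfl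


end ZFGrundy
end

section
/- Let G be a finite simple bipartite graph with parts X and Y, i.e., V(G) is the disjoint union of X and Y and every edge of G joins a vertex of X to a vertex of Y. Then γ^t_gr(G) = 2 γ^t_gr(G, X) = 2 γ^t_gr(G, Y), where γ^t_gr(G, X) denotes the largest length of a total dominating sequence of G all of whose vertices lie in X. -/
namespace ZFGrundy

variable {V : Type*}

section Proof16

variable {V : Type*}

lemma isTotDomSeq_elim0 (G : SimpleGraph V) : IsTotDomSeq G (Fin.elim0 : Fin 0 → V) :=
  ⟨fun i => i.elim0, fun i => i.elim0⟩

lemma totSet_bdd [Fintype V] (G : SimpleGraph V) :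
    BddAbove {k : ℕ | ∃ v : Fin k → V, IsTotDomSeq G v} := by
  refine ⟨Fintype.card V, fun k hk => ?_⟩
  obtain ⟨v, hv⟩ := hk
  simpa using Fintype.card_le_of_injective v hv.1

lemma totOnSet_bdd [Fintype V] (G : SimpleGraph V) (X : Set V) :
    BddAbove {k : ℕ | ∃ v : Fin k → V, IsTotDomSeq G v ∧ ∀ i, v i ∈ X} := by
  refine ⟨Fintype.card V, fun k hk => ?_⟩
  obtain ⟨v, hv, -⟩ := hk
  simpa using Fintype.card_le_of_injective v hv.1

lemma totOnSet_nonempty (G : SimpleGraph V) (X : Set V) :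
    {k : ℕ | ∃ v : Fin k → V, IsTotDomSeq G v ∧ ∀ i, v i ∈ X}.Nonempty :=
  ⟨0, Fin.elim0, isTotDomSeq_elim0 G, fun i => i.elim0⟩

lemma grundyTotOn_le_swap [Fintype V] (G : SimpleGraph V) (X Y : Set V)
    (hXY : ∀ u w, G.Adj u w → u ∈ X → w ∈ Y) :
    grundyTotOn G X ≤ grundyTotOn G Y := by
  apply csSup_le_csSup (totOnSet_bdd G Y) (totOnSet_nonempty G X)
  rintro k ⟨v, ⟨hinj, hdom⟩, hX⟩
  choose u hu hu2 using hdom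
  have huinj : Function.Injective u := by
    intro a b hab
    by_contra hne
    rcases Ne.lt_or_gt hne with h | h
    · exact hu2 b a h (by rw [← hab]; exact hu a)
    · exact hu2 a b h (by rw [hab]; exact hu b)
  refine ⟨fun i => u i.rev, ⟨?_, ?_⟩, fun i => hXY _ _ (hu i.rev) (hX i.rev)⟩
  · exact huinj.comp Fin.rev_injective
  · intro i
    refine ⟨v i.rev, (hu i.rev).symm, ?_⟩
    intro j hj hadj
    exact hu2 j.rev i.rev (Fin.rev_lt_rev.mpr hj) hadj.symm

lemma concat_mem [Fintype V] (G : SimpleGraph V) (X Y : Set V)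
    (hdisj : Disjoint X Y)
    (hXY : ∀ u w, G.Adj u w → u ∈ X → w ∈ Y)
    (hYX : ∀ u w, G.Adj u w → u ∈ Y → w ∈ X)
    {k m : ℕ} {v : Fin k → V} {w : Fin m → V}
    (hv : IsTotDomSeq G v) (hvX : ∀ i, v i ∈ X)
    (hw : IsTotDomSeq G w) (hwY : ∀ i, w i ∈ Y) :
    ∃ z : Fin (k + m) → V, IsTotDomSeq G z := by
  refine ⟨fun i => if h : (i : ℕ) < k then v ⟨i, h⟩
    else w ⟨(i : ℕ) - k, by have := i.isLt; omega⟩, ?_, ?_⟩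
  · intro a b hab
    by_cases ha : (a : ℕ) < k <;> by_cases hb : (b : ℕ) < k
    · simp only [dif_pos ha, dif_pos hb] at hab
      have h2 := hv.1 hab
      have h1 : (a : ℕ) = (b : ℕ) := by simpa [Fin.mk.injEq] using h2
      exact Fin.ext h1
    · simp only [dif_pos ha, dif_neg hb] at hab
      exfalso
      have h1 := hvX ⟨a, ha⟩
      rw [hab] at h1
      exact Set.disjoint_left.mp hdisj h1 (hwY _)
    · simp only [dif_neg ha, dif_pos hb] at hab
      exfalso
      have h1 := hvX ⟨b, hb⟩
      rw [← hab] at h1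
      exact Set.disjoint_left.mp hdisj h1 (hwY _)
    · simp only [dif_neg ha, dif_neg hb] at hab
      have := congrArg Fin.val (hw.1 hab)
      simp only at this
      exact Fin.ext (by omega)
  · intro i
    by_cases hi : (i : ℕ) < k
    · obtain ⟨u, hu1, hu2⟩ := hv.2 ⟨i, hi⟩
      refine ⟨u, by simp only [dif_pos hi]; exact hu1, ?_⟩
      intro j hj
      have hjk : (j : ℕ) < k := lt_of_lt_of_le (Fin.lt_def.mp hj) (le_of_lt hi)
      simp only [dif_pos hjk]
      exact hu2 ⟨j, hjk⟩ (Fin.lt_def.mp hj)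
    · obtain ⟨u, hu1, hu2⟩ := hw.2 ⟨(i : ℕ) - k, by have := i.isLt; omega⟩
      have huX : u ∈ X := hYX _ _ hu1 (hwY _)
      refine ⟨u, by simp only [dif_neg hi]; exact hu1, ?_⟩
      intro j hj
      by_cases hjk : (j : ℕ) < k
      · simp only [dif_pos hjk]
        intro hadj
        exact Set.disjoint_left.mp hdisj huX (hXY _ _ hadj (hvX ⟨j, hjk⟩))
      · simp only [dif_neg hjk]
        refine hu2 _ ?_
        have := Fin.lt_def.mp hj
        simp only [Fin.lt_def]
        omega

lemma subseq_mem (G : SimpleGraph V) {k : ℕ} {v : Fin k → V} (h : IsTotDomSeq G v)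
    (X : Set V) [DecidablePred (· ∈ X)] :
    ∃ vx : Fin ((Finset.univ.filter (fun i => v i ∈ X)).card) → V,
      IsTotDomSeq G vx ∧ ∀ i, vx i ∈ X := by
  set s := Finset.univ.filter (fun i => v i ∈ X) with hs
  have e := s.orderIsoOfFin rfl
  refine ⟨fun j => v (e j : Fin k), ⟨?_, ?_⟩, ?_⟩
  · intro a b hab
    exact e.injective (Subtype.val_injective (h.1 hab))
  · intro j
    obtain ⟨u, hu1, hu2⟩ := h.2 (e j : Fin k)
    refine ⟨u, hu1, ?_⟩
    intro j' hj'
    refine hu2 _ ?_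
    exact Subtype.coe_lt_coe.mpr (e.strictMono hj')
  · intro j
    exact (Finset.mem_filter.mp (e j).2).2

end Proof16

/-- if `G` is bipartite with parts `X` and `Y`, then
`γ^t_gr(G) = 2 γ^t_gr(G, X) = 2 γ^t_gr(G, Y)`. -/
theorem statement_16 {V : Type*} [Fintype V] (G : SimpleGraph V) (X Y : Set V)
    (hdisj : Disjoint X Y) (hunion : X ∪ Y = Set.univ)
    (hbip : ∀ u w : V, G.Adj u w → (u ∈ X ∧ w ∈ Y) ∨ (u ∈ Y ∧ w ∈ X)) :
    grundyTot G = 2 * grundyTotOn G X ∧ grundyTot G = 2 * grundyTotOn G Y := by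
  classical
  have hXY : ∀ u w, G.Adj u w → u ∈ X → w ∈ Y := by
    intro u w h hu
    rcases hbip u w h with ⟨_, h2⟩ | ⟨h1, _⟩
    · exact h2
    · exact absurd hu (Set.disjoint_right.mp hdisj h1)
  have hYX : ∀ u w, G.Adj u w → u ∈ Y → w ∈ X := by
    intro u w h hu
    rcases hbip u w h with ⟨h1, _⟩ | ⟨_, h2⟩
    · exact absurd hu (Set.disjoint_left.mp hdisj h1)
    · exact h2
  have heq : grundyTotOn G X = grundyTotOn G Y :=
    le_antisymm (grundyTotOn_le_swap G X Y hXY) (grundyTotOn_le_swap G Y X hYX)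
  have hge : grundyTotOn G X + grundyTotOn G Y ≤ grundyTot G := by
    obtain ⟨v, hv, hvX⟩ :=
      Nat.sSup_mem (totOnSet_nonempty G X) (totOnSet_bdd G X)
    obtain ⟨w, hw, hwY⟩ :=
      Nat.sSup_mem (totOnSet_nonempty G Y) (totOnSet_bdd G Y)
    obtain ⟨z, hz⟩ := concat_mem G X Y hdisj hXY hYX hv hvX hw hwY
    exact le_csSup (totSet_bdd G) ⟨z, hz⟩
  have hle : grundyTot G ≤ grundyTotOn G X + grundyTotOn G Y := by
    have hne : {k : ℕ | ∃ v : Fin k → V, IsTotDomSeq G v}.Nonempty :=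
      ⟨0, Fin.elim0, isTotDomSeq_elim0 G⟩
    apply csSup_le hne
    rintro k ⟨v, hv⟩
    obtain ⟨vx, hvx, hvxX⟩ := subseq_mem G hv X
    obtain ⟨vy, hvy, hvyY⟩ := subseq_mem G hv Y
    have hcard : (Finset.univ.filter (fun i => v i ∈ X)).card +
        (Finset.univ.filter (fun i => v i ∈ Y)).card = k := by
      have hcongr : Finset.univ.filter (fun i : Fin k => ¬ (v i ∈ X)) =
          Finset.univ.filter (fun i : Fin k => v i ∈ Y) := by
        apply Finset.filter_congr
        intro i _
        constructor
        · intro hnx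
          have : v i ∈ X ∪ Y := hunion ▸ Set.mem_univ _
          rcases this with h | h
          · exact absurd h hnx
          · exact h
        · intro hy hx
          exact Set.disjoint_left.mp hdisj hx hy
      have := Finset.card_filter_add_card_filter_not
        (s := (Finset.univ : Finset (Fin k))) (p := fun i => v i ∈ X)
      rw [hcongr] at this
      simpa using this
    calc k = (Finset.univ.filter (fun i => v i ∈ X)).card +
        (Finset.univ.filter (fun i => v i ∈ Y)).card := hcard.symm
      _ ≤ grundyTotOn G X + grundyTotOn G Y :=
        add_le_add (le_csSup (totOnSet_bdd G X) ⟨vx, hvx, hvxX⟩)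
          (le_csSup (totOnSet_bdd G Y) ⟨vy, hvy, hvyY⟩)
  have hmain : grundyTot G = grundyTotOn G X + grundyTotOn G Y :=
    le_antisymm hle hge
  constructor
  · rw [hmain, heq]; ring
  · rw [hmain, heq]; ring

end ZFGrundy
end
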